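/- arXiv:1701.03906 — 7 statements merged into one kernel-verified Lean document; each statement's English description precedes it below -/
import Mathlib

section
/- Let ν be a nonnegative σ-finite Borel measure on [0,∞), γ ≥ 0, and C ≥ 0. If lim_{a→∞} ν([0,a])/a^γ = C, then lim_{t→0⁺} t^γ ∫_{[0,∞)} e^{-tx} dν(x) = C · Γ(γ+1). -/
open MeasureTheory Filter Set Real
open scoped ENNReal

section aux
variable (ν : Measure ℝ)

lemma karamata_lay (t x : ℝ) (ht : 0 < t) :
    ∫⁻ s in Ioi x, ENNReal.ofReal (t * Real.exp (-(t*s))) = ENNReal.ofReal (Real.exp (-(t*x))) := by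
  have hint : IntegrableOn (fun s => t * Real.exp (-(t*s))) (Ioi x) := by
    have := (exp_neg_integrableOn_Ioi x ht).const_mul t
    simp only [neg_mul] at this; exact this
  rw [← ofReal_integral_eq_lintegral_ofReal hint (ae_of_all _ fun s => by positivity)]
  congr 1
  have h1 : ∫ s in Ioi x, Real.exp (-(t*s)) = t⁻¹ * Real.exp (-(t*x)) := by
    have := integral_comp_mul_left_Ioi (fun u => Real.exp (-u)) x ht
    simpa [integral_exp_neg_Ioi, integral_exp_Iic] using this
  rw [integral_const_mul, h1]; field_simp

lemma karamata_fub [SigmaFinite ν] (t : ℝ) (ht : 0 < t) :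
    ∫⁻ x in Ici 0, ENNReal.ofReal (Real.exp (-(t*x))) ∂ν
      = ∫⁻ s in Ioi 0, ENNReal.ofReal (t * Real.exp (-(t*s))) * ν (Icc 0 s) := by
  set c : ℝ → ℝ≥0∞ := fun s => ENNReal.ofReal (t * Real.exp (-(t*s))) with hc
  set F : ℝ → ℝ → ℝ≥0∞ := fun x s => ({p : ℝ × ℝ | p.1 ≤ p.2}.indicator (fun p => c p.2)) (x, s) with hF
  have hFind : ∀ x s, F x s = (Ici x).indicator c s := by
    intro x s
    by_cases hxs : x ≤ s <;> simp [hF, Set.indicator_apply, hxs]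
  have hcmeas : Measurable c := by
    apply ENNReal.measurable_ofReal.comp
    exact (Real.measurable_exp.comp ((measurable_id.const_mul t).neg)).const_mul t
  have step1 : ∫⁻ x in Ici 0, ENNReal.ofReal (Real.exp (-(t*x))) ∂ν
      = ∫⁻ x in Ici 0, (∫⁻ s in Ioi 0, F x s) ∂ν := by
    apply setLIntegral_congr_fun_ae measurableSet_Ici
    apply ae_of_all
    intro x hx
    have : ∫⁻ s in Ioi 0, F x s = ∫⁻ s in Ioi x, c s := by
      simp only [hFind]
      rw [lintegral_indicator measurableSet_Ici, Measure.restrict_restrict measurableSet_Ici]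
      congr 1
      apply Measure.restrict_congr_set
      rw [MeasureTheory.ae_eq_set]
      constructor
      · refine measure_mono_null (fun s hs => ?_) (measure_singleton x)
        simp only [mem_diff, mem_inter_iff, mem_Ici, mem_Ioi, not_lt] at hs
        simp [le_antisymm hs.2 hs.1.1]
      · refine measure_mono_null (t := (∅ : Set ℝ)) (fun s hs => ?_) (by simp)
        simp only [mem_diff, mem_inter_iff, mem_Ioi, mem_Ici, not_and, not_lt] at hs
        exact absurd (hs.2 hs.1.le) (not_le.2 (lt_of_le_of_lt hx hs.1))
    rw [this, karamata_lay t x ht]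
  rw [step1]
  have hmeas : AEMeasurable (Function.uncurry F) ((ν.restrict (Ici 0)).prod (volume.restrict (Ioi 0))) := by
    apply Measurable.aemeasurable
    apply Measurable.indicator
    · exact hcmeas.comp measurable_snd
    · exact measurableSet_le measurable_fst measurable_snd
  rw [lintegral_lintegral_swap hmeas]
  apply setLIntegral_congr_fun_ae measurableSet_Ioi
  apply ae_of_all
  intro s hs
  have : ∀ x : ℝ, F x s = (Iic s).indicator (fun _ => c s) x := by
    intro x
    by_cases hxs : x ≤ s <;> simp [hF, Set.indicator_apply, hxs]
  simp only [this]
  rw [lintegral_indicator measurableSet_Iic, setLIntegral_const,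
    Measure.restrict_apply measurableSet_Iic, Set.inter_comm, Set.Ici_inter_Iic]

lemma karamata_cov (t γ : ℝ) (ht : 0 < t) :
    ENNReal.ofReal (t^γ) * ∫⁻ s in Ioi 0, ENNReal.ofReal (t * Real.exp (-(t*s))) * ν (Icc 0 s)
      = ∫⁻ u in Ioi 0, ENNReal.ofReal (Real.exp (-u)) * (ENNReal.ofReal (t^γ) * ν (Icc 0 (u/t))) := by
  have hmono : Monotone fun s : ℝ => ν (Icc 0 s) :=
    fun a b hab => measure_mono (Icc_subset_Icc_right hab)
  have hm : Measurable fun s : ℝ => ν (Icc 0 s) := hmono.measurable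
  have he : Measurable fun s : ℝ => ENNReal.ofReal (Real.exp (-(t * s))) := by fun_prop
  set G : ℝ → ℝ≥0∞ := fun u => ENNReal.ofReal (Real.exp (-u)) * (ENNReal.ofReal (t^γ) * ν (Icc 0 (u/t))) with hG
  have hGmeas : Measurable G := by
    apply Measurable.mul
    · exact ENNReal.measurable_ofReal.comp (Real.measurable_exp.comp measurable_neg)
    · exact (hm.comp (measurable_id.div_const t)).const_mul _
  have hIGmeas : Measurable ((Ioi (0:ℝ)).indicator G) := hGmeas.indicator measurableSet_Ioi
  have key : ∫⁻ u in Ioi 0, G u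
      = ENNReal.ofReal t * ∫⁻ s in Ioi 0, ENNReal.ofReal (Real.exp (-(t*s))) * (ENNReal.ofReal (t^γ) * ν (Icc 0 s)) := by
    rw [← lintegral_indicator measurableSet_Ioi]
    conv_lhs => rw [← Real.smul_map_volume_mul_left ht.ne']
    rw [lintegral_smul_measure, lintegral_map hIGmeas (measurable_const_mul t),
      abs_of_pos ht]
    congr 1
    rw [← lintegral_indicator measurableSet_Ioi]
    apply lintegral_congr
    intro s
    have hiff : t * s ∈ Ioi (0:ℝ) ↔ s ∈ Ioi (0:ℝ) := by
      simp [mem_Ioi, mul_pos_iff_of_pos_left, ht]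
    by_cases hs : s ∈ Ioi (0:ℝ)
    · rw [Set.indicator_of_mem (hiff.2 hs), Set.indicator_of_mem hs, hG]
      simp only []
      rw [mul_comm t s, mul_div_assoc, div_self ht.ne', mul_one]
    · rw [Set.indicator_of_notMem (fun hh => hs (hiff.1 hh)), Set.indicator_of_notMem hs]
  rw [key]
  have h1 : ∀ s : ℝ, ENNReal.ofReal (t * Real.exp (-(t*s))) * ν (Icc 0 s)
      = ENNReal.ofReal t * (ENNReal.ofReal (Real.exp (-(t*s))) * ν (Icc 0 s)) := by
    intro s
    rw [ENNReal.ofReal_mul ht.le, mul_assoc]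
  simp only [h1]
  rw [lintegral_const_mul (f := fun s => ENNReal.ofReal (Real.exp (-(t*s))) * ν (Icc 0 s)) _ (he.mul hm)]
  have h2 : ∀ s : ℝ, ENNReal.ofReal (Real.exp (-(t*s))) * (ENNReal.ofReal (t^γ) * ν (Icc 0 s))
      = ENNReal.ofReal (t^γ) * (ENNReal.ofReal (Real.exp (-(t*s))) * ν (Icc 0 s)) := by
    intro s; ring
  simp only [h2]
  rw [lintegral_const_mul (f := fun s => ENNReal.ofReal (Real.exp (-(t*s))) * ν (Icc 0 s)) _ (he.mul hm)]
  ring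

end aux

lemma karamata_gamma (γ : ℝ) (hγ : 0 ≤ γ) :
    ∫⁻ u in Ioi (0:ℝ), ENNReal.ofReal (Real.exp (-u) * u^γ) = ENNReal.ofReal (Real.Gamma (γ+1)) := by
  have h1 : (0:ℝ) < γ + 1 := by linarith
  rw [Real.Gamma_eq_integral h1]
  have hint : IntegrableOn (fun x : ℝ => Real.exp (-x) * x ^ (γ + 1 - 1)) (Ioi 0) :=
    Real.GammaIntegral_convergent h1
  simp only [add_sub_cancel_right] at hint ⊢
  rw [← ofReal_integral_eq_lintegral_ofReal hint]
  filter_upwards [self_mem_ae_restrict measurableSet_Ioi] with u hu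
  have hu0 : (0:ℝ) < u := hu
  positivity

/-- Abelian theorem: if `ν([0,a])/a^γ → C` as `a → ∞`, then
`t^γ ∫_{[0,∞)} e^{-tx} dν(x) → C Γ(γ+1)` as `t → 0⁺`. -/
theorem abelian_karamata
    (ν : Measure ℝ) [SigmaFinite ν] (hν : ν (Set.Iio 0) = 0)
    (γ C : ℝ) (hγ : 0 ≤ γ) (hC : 0 ≤ C)
    (h : Tendsto (fun a : ℝ => ν (Set.Icc 0 a) / ENNReal.ofReal (a ^ γ))
      atTop (nhds (ENNReal.ofReal C))) :
    Tendsto (fun t : ℝ =>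
        ENNReal.ofReal (t ^ γ) *
          ∫⁻ x in Set.Ici (0:ℝ), ENNReal.ofReal (Real.exp (-t * x)) ∂ν)
      (nhdsWithin 0 (Set.Ioi 0)) (nhds (ENNReal.ofReal (C * Real.Gamma (γ + 1)))) := by
  have hmono : Monotone fun s : ℝ => ν (Icc 0 s) :=
    fun a b hab => measure_mono (Icc_subset_Icc_right hab)
  have hm : Measurable fun s : ℝ => ν (Icc 0 s) := hmono.measurable
  -- eventual bound from the hypothesis
  have hev : ∀ᶠ a in atTop, ν (Icc 0 a) / ENNReal.ofReal (a ^ γ) < ENNReal.ofReal (C+1) := by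
    apply h.eventually_lt_const
    rw [ENNReal.ofReal_lt_ofReal_iff (by linarith)]
    linarith
  obtain ⟨A₀, hA₀⟩ := eventually_atTop.1 hev
  set A : ℝ := max A₀ 1 with hA
  have hA1 : (1:ℝ) ≤ A := le_max_right _ _
  have hA0 : (0:ℝ) < A := lt_of_lt_of_le one_pos hA1
  have hbd : ∀ s : ℝ, A ≤ s → ν (Icc 0 s) ≤ ENNReal.ofReal (C+1) * ENNReal.ofReal (s^γ) := by
    intro s hs
    have hs0 : (0:ℝ) < s := lt_of_lt_of_le hA0 hs
    have hd0 : ENNReal.ofReal (s^γ) ≠ 0 := by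
      simp [ENNReal.ofReal_eq_zero, not_le, Real.rpow_pos_of_pos hs0]
    have hdt : ENNReal.ofReal (s^γ) ≠ ⊤ := ENNReal.ofReal_ne_top
    have := (hA₀ s (le_trans (le_max_left _ _) hs)).le
    calc ν (Icc 0 s) = ν (Icc 0 s) / ENNReal.ofReal (s^γ) * ENNReal.ofReal (s^γ) :=
          (ENNReal.div_mul_cancel hd0 hdt).symm
      _ ≤ ENNReal.ofReal (C+1) * ENNReal.ofReal (s^γ) := mul_le_mul_left this _
  have hfin : ∀ a : ℝ, ν (Icc 0 a) ≠ ⊤ := by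
    intro a
    have h1 : ν (Icc 0 a) ≤ ν (Icc 0 (max a A)) := hmono (le_max_left _ _)
    have h2 := hbd (max a A) (le_max_right _ _)
    exact ((h1.trans h2).trans_lt (ENNReal.mul_lt_top ENNReal.ofReal_lt_top ENNReal.ofReal_lt_top)).ne
  -- the family of integrands after change of variables
  set F : ℝ → ℝ → ℝ≥0∞ := fun t u =>
    ENNReal.ofReal (Real.exp (-u)) * (ENNReal.ofReal (t^γ) * ν (Icc 0 (u/t))) with hFdef
  set f : ℝ → ℝ≥0∞ := fun u =>
    ENNReal.ofReal (Real.exp (-u)) * (ENNReal.ofReal (u^γ) * ENNReal.ofReal C) with hfdef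
  -- pointwise convergence
  have hpt : ∀ u : ℝ, 0 < u →
      Tendsto (fun t : ℝ => ENNReal.ofReal (t^γ) * ν (Icc 0 (u/t))) (nhdsWithin 0 (Ioi 0))
        (nhds (ENNReal.ofReal (u^γ) * ENNReal.ofReal C)) := by
    intro u hu
    have h1 : Tendsto (fun t : ℝ => u / t) (nhdsWithin 0 (Ioi 0)) atTop := by
      simp only [div_eq_mul_inv]
      exact tendsto_inv_nhdsGT_zero.const_mul_atTop hu
    have h2 := ENNReal.Tendsto.const_mul (a := ENNReal.ofReal (u^γ)) (h.comp h1)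
      (Or.inr ENNReal.ofReal_ne_top)
    refine Tendsto.congr' ?_ h2
    filter_upwards [self_mem_nhdsWithin] with t ht
    have ht : (0:ℝ) < t := ht
    have ha : (0:ℝ) < u / t := div_pos hu ht
    have hkey : ENNReal.ofReal (u^γ) = ENNReal.ofReal (t^γ) * ENNReal.ofReal ((u/t)^γ) := by
      rw [← ENNReal.ofReal_mul (Real.rpow_nonneg ht.le γ), ← Real.mul_rpow ht.le ha.le,
        mul_div_cancel₀ u ht.ne']
    have hd0 : ENNReal.ofReal ((u/t)^γ) ≠ 0 := by
      simp [ENNReal.ofReal_eq_zero, not_le, Real.rpow_pos_of_pos ha]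
    simp only [Function.comp]
    rw [hkey, mul_assoc, mul_comm (ENNReal.ofReal ((u/t)^γ)),
      ENNReal.div_mul_cancel hd0 ENNReal.ofReal_ne_top]
  -- dominated convergence
  set bound : ℝ → ℝ≥0∞ := fun u =>
    ENNReal.ofReal (Real.exp (-u)) * (ENNReal.ofReal (C+1) * ENNReal.ofReal (u^γ) + ν (Icc 0 A)) with hbdef
  have hGamma := karamata_gamma γ hγ
  have hexpmeas : Measurable fun u : ℝ => ENNReal.ofReal (Real.exp (-u)) := by fun_prop
  have hboundfin : ∫⁻ u in Ioi 0, bound u ≠ ⊤ := by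
    have heq : ∀ u ∈ Ioi (0:ℝ), bound u
        = ENNReal.ofReal (C+1) * ENNReal.ofReal (Real.exp (-u) * u^γ)
          + ν (Icc 0 A) * ENNReal.ofReal (Real.exp (-u)) := by
      intro u hu
      have hu0 : (0:ℝ) < u := hu
      rw [hbdef]
      simp only []
      rw [mul_add, ENNReal.ofReal_mul (by positivity)]
      ring
    rw [setLIntegral_congr_fun_ae measurableSet_Ioi (ae_of_all _ heq)]
    rw [lintegral_add_left (by fun_prop), lintegral_const_mul _ (by fun_prop),
      lintegral_const_mul _ hexpmeas, hGamma]
    have hexpint : ∫⁻ u in Ioi (0:ℝ), ENNReal.ofReal (Real.exp (-u)) = ENNReal.ofReal 1 := by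
      have hint : IntegrableOn (fun u : ℝ => Real.exp (-u)) (Ioi 0) := by
        have := exp_neg_integrableOn_Ioi 0 one_pos
        simpa using this
      rw [← ofReal_integral_eq_lintegral_ofReal hint (ae_of_all _ fun u => (Real.exp_pos _).le),
        integral_exp_neg_Ioi_zero]
    rw [hexpint]
    exact (ENNReal.add_lt_top.2 ⟨ENNReal.mul_lt_top ENNReal.ofReal_lt_top ENNReal.ofReal_lt_top,
      ENNReal.mul_lt_top (hfin A).lt_top ENNReal.ofReal_lt_top⟩).ne
  have hdct : Tendsto (fun t : ℝ => ∫⁻ u in Ioi 0, F t u) (nhdsWithin 0 (Ioi 0))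
      (nhds (∫⁻ u in Ioi 0, f u)) := by
    apply tendsto_lintegral_filter_of_dominated_convergence bound
    · apply Eventually.of_forall
      intro t
      exact hexpmeas.mul ((hm.comp (measurable_id.div_const t)).const_mul _)
    · have hmem : Ioo (0:ℝ) 1 ∈ nhdsWithin (0:ℝ) (Ioi 0) :=
        Ioo_mem_nhdsGT_of_mem (by simp)
      filter_upwards [hmem] with t ht
      rw [ae_restrict_iff' measurableSet_Ioi]
      apply ae_of_all
      intro u hu
      have hu0 : (0:ℝ) < u := hu
      apply mul_le_mul_right
      rcases le_or_gt A (u/t) with hca | hca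
      · have h1 : ENNReal.ofReal (t^γ) * ν (Icc 0 (u/t))
            ≤ ENNReal.ofReal (t^γ) * (ENNReal.ofReal (C+1) * ENNReal.ofReal ((u/t)^γ)) :=
          mul_le_mul_right (hbd _ hca) _
        refine h1.trans (le_trans (le_of_eq ?_) le_self_add)
        have ha : (0:ℝ) < u / t := div_pos hu0 ht.1
        rw [mul_comm (ENNReal.ofReal (C+1)), ← mul_assoc,
          ← ENNReal.ofReal_mul (Real.rpow_nonneg ht.1.le γ),
          ← Real.mul_rpow ht.1.le ha.le, mul_div_cancel₀ u ht.1.ne']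
        ring
      · have h1 : ν (Icc 0 (u/t)) ≤ ν (Icc 0 A) := hmono hca.le
        have h2 : ENNReal.ofReal (t^γ) ≤ 1 := by
          rw [← ENNReal.ofReal_one]
          exact ENNReal.ofReal_le_ofReal (Real.rpow_le_one ht.1.le ht.2.le hγ)
        calc ENNReal.ofReal (t^γ) * ν (Icc 0 (u/t)) ≤ 1 * ν (Icc 0 A) := mul_le_mul' h2 h1
          _ = ν (Icc 0 A) := one_mul _
          _ ≤ _ := le_add_self
    · exact hboundfin
    · rw [ae_restrict_iff' measurableSet_Ioi]
      apply ae_of_all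
      intro u hu
      exact ENNReal.Tendsto.const_mul (hpt u hu) (Or.inr ENNReal.ofReal_ne_top)
  -- identify the limit
  have hlimval : ∫⁻ u in Ioi 0, f u = ENNReal.ofReal (C * Real.Gamma (γ+1)) := by
    have heq : ∀ u ∈ Ioi (0:ℝ), f u = ENNReal.ofReal C * ENNReal.ofReal (Real.exp (-u) * u^γ) := by
      intro u hu
      have hu0 : (0:ℝ) < u := hu
      rw [hfdef]
      simp only []
      rw [ENNReal.ofReal_mul (by positivity)]
      ring
    rw [setLIntegral_congr_fun_ae measurableSet_Ioi (ae_of_all _ heq),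
      lintegral_const_mul _ (by fun_prop), hGamma, ← ENNReal.ofReal_mul hC]
  rw [← hlimval]
  refine Tendsto.congr' ?_ hdct
  filter_upwards [self_mem_nhdsWithin] with t ht
  have ht : (0:ℝ) < t := ht
  simp only [neg_mul]
  rw [karamata_fub ν t ht, karamata_cov ν t γ ht]
end

section
/- Let ν be a nonnegative σ-finite Borel measure on [0,∞), γ ≥ 0, and C ∈ [0,∞). If limsup_{a→∞} ν([0,a])/a^γ ≤ C, then limsup_{t→0⁺} t^γ ∫_{[0,∞)} e^{-tx} dν(x) ≤ C · Γ(γ+1). -/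
open MeasureTheory Filter Set Real

private lemma aux_exp (t x : ℝ) (ht : 0 < t) :
    ENNReal.ofReal (Real.exp (-t * x))
      = ∫⁻ a in Set.Ioi x, ENNReal.ofReal (t * Real.exp (-t * a)) := by
  have hint : IntegrableOn (fun a : ℝ => t * Real.exp (-t * a)) (Set.Ioi x) :=
    (exp_neg_integrableOn_Ioi x ht).const_mul t
  rw [← MeasureTheory.ofReal_integral_eq_lintegral_ofReal hint
      (ae_of_all _ fun a => by positivity)]
  congr 1
  rw [MeasureTheory.integral_const_mul]
  have h1 : (∫ a in Set.Ioi x, Real.exp (-t * a))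
      = t⁻¹ • ∫ u in Set.Ioi (t * x), Real.exp (-u) := by
    have := MeasureTheory.integral_comp_mul_left_Ioi (fun u => Real.exp (-u)) x ht
    simpa [neg_mul] using this
  rw [h1, integral_exp_neg_Ioi, smul_eq_mul, ← mul_assoc, mul_inv_cancel₀ ht.ne',
    one_mul, neg_mul]

private lemma aux_fubini (ν : Measure ℝ) [SigmaFinite ν] (t : ℝ) (ht : 0 < t) :
    ∫⁻ x in Set.Ici (0:ℝ), ENNReal.ofReal (Real.exp (-t * x)) ∂ν
      = ∫⁻ a, ENNReal.ofReal (t * Real.exp (-t * a)) * ν (Set.Ico 0 a) := by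
  set g : ℝ → ENNReal := fun a => ENNReal.ofReal (t * Real.exp (-t * a)) with hg
  have hgm : Measurable g := by
    apply ENNReal.measurable_ofReal.comp
    fun_prop
  have hmeas : Measurable (Function.uncurry fun x a => (Set.Ioi x).indicator g a) := by
    have heq : (Function.uncurry fun x a => (Set.Ioi x).indicator g a)
        = fun p : ℝ × ℝ => ({q : ℝ × ℝ | q.1 < q.2}).indicator (fun q => g q.2) p := by
      funext p
      by_cases h : p.1 < p.2 <;>
        simp [Function.uncurry, Set.indicator, h, Set.mem_Ioi]
    rw [heq]
    exact (hgm.comp measurable_snd).indicator (measurableSet_lt measurable_fst measurable_snd)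
  calc ∫⁻ x in Set.Ici (0:ℝ), ENNReal.ofReal (Real.exp (-t * x)) ∂ν
      = ∫⁻ x, (∫⁻ a, (Set.Ioi x).indicator g a) ∂(ν.restrict (Set.Ici 0)) := by
        refine lintegral_congr fun x => ?_
        rw [lintegral_indicator measurableSet_Ioi]
        exact aux_exp t x ht
    _ = ∫⁻ a, ∫⁻ x, (Set.Ioi x).indicator g a ∂(ν.restrict (Set.Ici 0)) := by
        exact lintegral_lintegral_swap hmeas.aemeasurable
    _ = ∫⁻ a, g a * (ν.restrict (Set.Ici 0)) (Set.Iio a) := by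
        refine lintegral_congr fun a => ?_
        have h2 : ∀ x, (Set.Ioi x).indicator g a
            = (Set.Iio a).indicator (fun _ => g a) x := fun x => by
          by_cases h : x < a <;> simp [Set.indicator, h, Set.mem_Ioi, Set.mem_Iio]
        simp_rw [h2]
        exact lintegral_indicator_const measurableSet_Iio _
    _ = ∫⁻ a, g a * ν (Set.Ico 0 a) := by
        refine lintegral_congr fun a => ?_
        rw [Measure.restrict_apply measurableSet_Iio, Set.Iio_inter_Ici]

private lemma aux_gamma {γ t : ℝ} (hγ : 0 ≤ γ) (ht : 0 < t) :
    ∫⁻ a in Set.Ioi (0:ℝ),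
        ENNReal.ofReal (t ^ (γ + 1) * (a ^ γ * Real.exp (-t * a)))
      = ENNReal.ofReal (Real.Gamma (γ + 1)) := by
  have hint : IntegrableOn (fun a : ℝ => a ^ γ * Real.exp (-t * a)) (Set.Ioi 0) := by
    have := integrableOn_rpow_mul_exp_neg_mul_rpow
      (by linarith : (-1:ℝ) < γ) (by norm_num : (0:ℝ) < 1) ht
    simpa [Real.rpow_one] using this
  have hnn : 0 ≤ᵐ[volume.restrict (Set.Ioi (0:ℝ))]
      fun a : ℝ => t ^ (γ + 1) * (a ^ γ * Real.exp (-t * a)) := by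
    refine (ae_restrict_iff' measurableSet_Ioi).2 (ae_of_all _ fun a ha => ?_)
    have ha' : (0:ℝ) < a := ha
    positivity
  rw [← MeasureTheory.ofReal_integral_eq_lintegral_ofReal (hint.const_mul _) hnn]
  congr 1
  rw [MeasureTheory.integral_const_mul]
  have h := Real.integral_rpow_mul_exp_neg_mul_Ioi
    (by linarith : (0:ℝ) < γ + 1) ht
  simp only [add_sub_cancel_right, neg_mul] at h ⊢
  rw [h, ← mul_assoc, ← Real.mul_rpow ht.le (by positivity),
    mul_one_div_cancel ht.ne', Real.one_rpow, one_mul]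

/-- One-sided Abelian estimate (limsup version): if `limsup_{a→∞} ν([0,a])/a^γ ≤ C < ∞`,
then `limsup_{t→0⁺} t^γ ∫_{[0,∞)} e^{-tx} dν(x) ≤ C Γ(γ+1)`. -/
theorem abelian_limsup
    (ν : Measure ℝ) [SigmaFinite ν] (hν : ν (Set.Iio 0) = 0)
    (γ C : ℝ) (hγ : 0 ≤ γ) (hC : 0 ≤ C)
    (h : Filter.limsup (fun a : ℝ => ν (Set.Icc 0 a) / ENNReal.ofReal (a ^ γ)) atTop
      ≤ ENNReal.ofReal C) :
    Filter.limsup (fun t : ℝ =>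
        ENNReal.ofReal (t ^ γ) *
          ∫⁻ x in Set.Ici (0:ℝ), ENNReal.ofReal (Real.exp (-t * x)) ∂ν)
      (nhdsWithin 0 (Set.Ioi 0))
      ≤ ENNReal.ofReal (C * Real.Gamma (γ + 1)) := by
  set F : ℝ → ENNReal := fun t =>
    ENNReal.ofReal (t ^ γ) *
      ∫⁻ x in Set.Ici (0:ℝ), ENNReal.ofReal (Real.exp (-t * x)) ∂ν with hF
  have hΓpos : 0 < Real.Gamma (γ + 1) := Real.Gamma_pos_of_pos (by linarith)
  have key : ∀ ε : ℝ, 0 < ε →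
      Filter.limsup F (nhdsWithin 0 (Set.Ioi 0))
        ≤ ENNReal.ofReal ((C + ε) * Real.Gamma (γ + 1)) := by
    intro ε hε
    have hCε : (0:ℝ) < C + ε := by linarith
    have h2 : ∀ᶠ a in atTop,
        ν (Set.Icc 0 a) / ENNReal.ofReal (a ^ γ) < ENNReal.ofReal (C + ε) := by
      refine eventually_lt_of_limsup_lt (lt_of_le_of_lt h ?_)
      exact (ENNReal.ofReal_lt_ofReal_iff hCε).2 (by linarith)
    obtain ⟨A₀, hA₀⟩ := eventually_atTop.1 h2
    set A : ℝ := max A₀ 1 with hA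
    have hA1 : (1:ℝ) ≤ A := le_max_right _ _
    have hA0 : (0:ℝ) < A := lt_of_lt_of_le one_pos hA1
    have hbound : ∀ a, A ≤ a →
        ν (Set.Icc 0 a) ≤ ENNReal.ofReal (C + ε) * ENNReal.ofReal (a ^ γ) := by
      intro a ha
      have h1a : (1:ℝ) ≤ a := hA1.trans ha
      have hpow : (1:ℝ) ≤ a ^ γ := Real.one_le_rpow h1a hγ
      have hlt := hA₀ a ((le_max_left _ _).trans ha)
      rw [ENNReal.div_lt_iff (Or.inl ?hz) (Or.inl ENNReal.ofReal_ne_top)] at hlt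
      · exact hlt.le
      case hz => exact (ENNReal.ofReal_pos.2 (by linarith)).ne'
    set M : ENNReal := ν (Set.Icc 0 A) with hM
    have hMfin : M ≠ ⊤ := by
      refine ne_top_of_le_ne_top ?_ (hbound A le_rfl)
      exact ENNReal.mul_ne_top ENNReal.ofReal_ne_top ENNReal.ofReal_ne_top
    -- pointwise bound
    have hpt : ∀ t : ℝ, 0 < t →
        F t ≤ ENNReal.ofReal (t ^ (γ + 1) * A) * M
          + ENNReal.ofReal ((C + ε) * Real.Gamma (γ + 1)) := by
      intro t ht
      have hfub := aux_fubini ν t ht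
      set g : ℝ → ENNReal := fun a => ENNReal.ofReal (t * Real.exp (-t * a)) with hg
      set f : ℝ → ENNReal := fun a => g a * ν (Set.Ico 0 a) with hf'
      -- the whole-line integral equals the integral over Ioi 0
      have hsplit0 : ∫⁻ a, f a = ∫⁻ a in Set.Ioi (0:ℝ), f a := by
        rw [← lintegral_add_compl f measurableSet_Ioi]
        have hz : ∫⁻ a in (Set.Ioi (0:ℝ))ᶜ, f a = 0 := by
          rw [Set.compl_Ioi]
          rw [setLIntegral_congr_fun measurableSet_Iic
            (fun a (ha : a ≤ 0) => ?_), lintegral_zero]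
          have : Set.Ico (0:ℝ) a = ∅ := Set.Ico_eq_empty (by simpa using ha)
          simp [hf', this]
        rw [hz, add_zero]
      have hsplit : ∫⁻ a in Set.Ioi (0:ℝ), f a
          = (∫⁻ a in Set.Ioc 0 A, f a) + ∫⁻ a in Set.Ioi A, f a := by
        rw [← lintegral_union measurableSet_Ioi Set.Ioc_disjoint_Ioi_same,
          Set.Ioc_union_Ioi_eq_Ioi hA0.le]
      -- piece 1
      have hp1 : ∫⁻ a in Set.Ioc 0 A, f a ≤ ENNReal.ofReal t * M * ENNReal.ofReal A := by
        have hle : ∀ a ∈ Set.Ioc (0:ℝ) A, f a ≤ ENNReal.ofReal t * M := by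
          intro a ha
          refine mul_le_mul' ?_ ?_
          · refine ENNReal.ofReal_le_ofReal ?_
            nlinarith [Real.exp_le_one_iff.2 (by nlinarith [ha.1.le] : -t * a ≤ 0),
              Real.exp_pos (-t * a)]
          · exact measure_mono (fun x hx => ⟨hx.1, hx.2.le.trans ha.2⟩)
        calc ∫⁻ a in Set.Ioc 0 A, f a
            ≤ ∫⁻ _ in Set.Ioc (0:ℝ) A, ENNReal.ofReal t * M :=
              setLIntegral_mono' measurableSet_Ioc hle
          _ = ENNReal.ofReal t * M * volume (Set.Ioc (0:ℝ) A) := setLIntegral_const _ _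
          _ = ENNReal.ofReal t * M * ENNReal.ofReal A := by
              rw [Real.volume_Ioc, sub_zero]
      -- piece 2
      have hp2 : ∫⁻ a in Set.Ioi A, f a
          ≤ ENNReal.ofReal (C + ε)
            * ∫⁻ a in Set.Ioi (0:ℝ), ENNReal.ofReal (t * Real.exp (-t * a) * a ^ γ) := by
        have hle : ∀ a ∈ Set.Ioi A, f a
            ≤ ENNReal.ofReal (C + ε) * ENNReal.ofReal (t * Real.exp (-t * a) * a ^ γ) := by
          intro a ha
          have ha' : A ≤ a := (Set.mem_Ioi.1 ha).le
          have hb := hbound a ha'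
          have hν' : ν (Set.Ico 0 a) ≤ ν (Set.Icc 0 a) :=
            measure_mono Set.Ico_subset_Icc_self
          calc f a ≤ g a * (ENNReal.ofReal (C + ε) * ENNReal.ofReal (a ^ γ)) :=
                mul_le_mul' le_rfl (hν'.trans hb)
            _ = ENNReal.ofReal (C + ε) * ENNReal.ofReal (t * Real.exp (-t * a) * a ^ γ) := by
                rw [ENNReal.ofReal_mul (by positivity), hg]
                ring
        calc ∫⁻ a in Set.Ioi A, f a
            ≤ ∫⁻ a in Set.Ioi A,
                ENNReal.ofReal (C + ε) * ENNReal.ofReal (t * Real.exp (-t * a) * a ^ γ) :=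
              setLIntegral_mono' measurableSet_Ioi hle
          _ ≤ ∫⁻ a in Set.Ioi (0:ℝ),
                ENNReal.ofReal (C + ε) * ENNReal.ofReal (t * Real.exp (-t * a) * a ^ γ) :=
              lintegral_mono_set (Set.Ioi_subset_Ioi hA0.le)
          _ = ENNReal.ofReal (C + ε)
              * ∫⁻ a in Set.Ioi (0:ℝ), ENNReal.ofReal (t * Real.exp (-t * a) * a ^ γ) :=
              lintegral_const_mul' _ _ ENNReal.ofReal_ne_top
      -- gamma evaluation of the weighted piece 2
      have hgam : ENNReal.ofReal (t ^ γ)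
          * ∫⁻ a in Set.Ioi (0:ℝ), ENNReal.ofReal (t * Real.exp (-t * a) * a ^ γ)
          = ENNReal.ofReal (Real.Gamma (γ + 1)) := by
        rw [← lintegral_const_mul' _ _ ENNReal.ofReal_ne_top]
        rw [← aux_gamma hγ ht]
        refine setLIntegral_congr_fun measurableSet_Ioi (fun a ha => ?_)
        rw [← ENNReal.ofReal_mul (by positivity)]
        congr 1
        rw [Real.rpow_add_one ht.ne' γ]
        ring
      -- combine
      have hmain : F t ≤ ENNReal.ofReal (t ^ γ)
          * ((ENNReal.ofReal t * M * ENNReal.ofReal A)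
            + ENNReal.ofReal (C + ε)
              * ∫⁻ a in Set.Ioi (0:ℝ), ENNReal.ofReal (t * Real.exp (-t * a) * a ^ γ)) := by
        rw [hF]
        refine mul_le_mul' le_rfl ?_
        rw [hfub, hsplit0, hsplit]
        exact add_le_add hp1 hp2
      refine hmain.trans ?_
      rw [mul_add]
      refine add_le_add ?_ ?_
      · have : ENNReal.ofReal (t ^ γ) * (ENNReal.ofReal t * M * ENNReal.ofReal A)
            = ENNReal.ofReal (t ^ (γ + 1) * A) * M := by
          rw [Real.rpow_add_one ht.ne' γ, ENNReal.ofReal_mul (by positivity),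
            ENNReal.ofReal_mul (by positivity)]
          ring
        rw [this]
      · rw [← mul_assoc, mul_comm (ENNReal.ofReal (t ^ γ)) (ENNReal.ofReal (C + ε)),
          mul_assoc, hgam, ← ENNReal.ofReal_mul (by positivity)]
    -- limsup comparison
    have h0A : Tendsto (fun t : ℝ => ENNReal.ofReal (t ^ (γ + 1) * A) * M)
        (nhdsWithin 0 (Set.Ioi 0)) (nhds 0) := by
      have h1 : Tendsto (fun t : ℝ => t ^ (γ + 1) * A) (nhdsWithin 0 (Set.Ioi 0)) (nhds 0) := by
        have hc : ContinuousAt (fun t : ℝ => t ^ (γ + 1)) 0 :=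
          Real.continuousAt_rpow_const 0 (γ + 1) (Or.inr (by linarith))
        have h2 : Tendsto (fun t : ℝ => t ^ (γ + 1)) (nhdsWithin 0 (Set.Ioi 0)) (nhds 0) := by
          have h2' : Tendsto (fun t : ℝ => t ^ (γ + 1)) (nhds 0) (nhds 0) := by
            have := hc.tendsto
            rwa [Real.zero_rpow (by linarith : γ + 1 ≠ 0)] at this
          exact h2'.mono_left nhdsWithin_le_nhds
        simpa using h2.mul_const A
      have h3 : Tendsto (fun t : ℝ => ENNReal.ofReal (t ^ (γ + 1) * A))
          (nhdsWithin 0 (Set.Ioi 0)) (nhds 0) := by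
        have := (ENNReal.continuous_ofReal.tendsto 0).comp h1
        simpa [Function.comp_def] using this
      have := ENNReal.Tendsto.mul_const h3 (Or.inr hMfin)
      simpa using this
    have hG : Tendsto (fun t : ℝ => ENNReal.ofReal (t ^ (γ + 1) * A) * M
        + ENNReal.ofReal ((C + ε) * Real.Gamma (γ + 1)))
        (nhdsWithin 0 (Set.Ioi 0))
        (nhds (ENNReal.ofReal ((C + ε) * Real.Gamma (γ + 1)))) := by
      have := h0A.add (tendsto_const_nhds
        (x := ENNReal.ofReal ((C + ε) * Real.Gamma (γ + 1)))
        (f := nhdsWithin (0:ℝ) (Set.Ioi 0)))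
      simpa using this
    calc Filter.limsup F (nhdsWithin 0 (Set.Ioi 0))
        ≤ Filter.limsup (fun t : ℝ => ENNReal.ofReal (t ^ (γ + 1) * A) * M
            + ENNReal.ofReal ((C + ε) * Real.Gamma (γ + 1)))
            (nhdsWithin 0 (Set.Ioi 0)) := by
          refine limsup_le_limsup ?_
          filter_upwards [self_mem_nhdsWithin] with t ht
          exact hpt t ht
      _ = ENNReal.ofReal ((C + ε) * Real.Gamma (γ + 1)) := hG.limsup_eq
  -- conclude by letting ε → 0
  refine ENNReal.le_of_forall_pos_le_add fun δ hδ _ => ?_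
  have hδ' : (0:ℝ) < (δ : ℝ) / Real.Gamma (γ + 1) := by positivity
  have := key ((δ : ℝ) / Real.Gamma (γ + 1)) hδ'
  refine this.trans ?_
  have heq : (C + (δ : ℝ) / Real.Gamma (γ + 1)) * Real.Gamma (γ + 1)
      = C * Real.Gamma (γ + 1) + (δ : ℝ) := by
    field_simp
  rw [heq, ENNReal.ofReal_add (by positivity) (by positivity)]
  simp
end

section
/- Let ν be a nonnegative σ-finite Borel measure on [0,∞), γ ≥ 0, and c ≥ 0. If liminf_{a→∞} ν([0,a])/a^γ ≥ c, then liminf_{t→0⁺} t^γ ∫_{[0,∞)} e^{-tx} dν(x) ≥ c · Γ(γ+1). -/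
open MeasureTheory Filter Set Real
open scoped ENNReal

lemma laplace_layercake (ν : Measure ℝ) [SigmaFinite ν] {t : ℝ} (ht : 0 < t) :
    ∫⁻ x in Set.Ici (0:ℝ), ENNReal.ofReal (Real.exp (-t * x)) ∂ν
      = ∫⁻ s, ENNReal.ofReal (t * Real.exp (-t * s)) * ν (Set.Icc 0 s) := by
  set F : ℝ → ℝ → ℝ≥0∞ := fun x s =>
    Set.indicator {q : ℝ × ℝ | q.1 ≤ q.2} (fun q => ENNReal.ofReal (t * Real.exp (-t * q.2))) (x, s)
    with hF
  have hmeas : Measurable (Function.uncurry F) := by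
    apply Measurable.indicator
    · fun_prop
    · exact measurableSet_le measurable_fst measurable_snd
  have inner1 : ∀ x : ℝ, ENNReal.ofReal (Real.exp (-t * x)) = ∫⁻ s, F x s ∂volume := by
    intro x
    have hfun : (fun s => F x s)
        = (Set.Ici x).indicator (fun s => ENNReal.ofReal (t * Real.exp (-t * s))) := by
      funext s
      by_cases hxs : x ≤ s <;> simp [hF, Set.indicator, hxs]
    rw [hfun, lintegral_indicator measurableSet_Ici,
      ← Measure.restrict_congr_set Ioi_ae_eq_Ici]
    have hint : IntegrableOn (fun s : ℝ => t * Real.exp (-t * s)) (Set.Ioi x) :=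
      (exp_neg_integrableOn_Ioi x ht).const_mul t
    rw [← ofReal_integral_eq_lintegral_ofReal hint
        (Filter.Eventually.of_forall fun s => by positivity)]
    congr 1
    rw [integral_const_mul]
    have : (fun s : ℝ => Real.exp (-t * s)) = fun s : ℝ => Real.exp (-(t * s)) := by
      funext s; ring_nf
    rw [this]
    rw [integral_comp_mul_left_Ioi (fun u => Real.exp (-u)) x ht]
    rw [integral_exp_neg_Ioi]
    rw [smul_eq_mul, ← mul_assoc, mul_inv_cancel₀ ht.ne', one_mul, neg_mul]
  calc ∫⁻ x in Set.Ici (0:ℝ), ENNReal.ofReal (Real.exp (-t * x)) ∂ν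
      = ∫⁻ x in Set.Ici (0:ℝ), ∫⁻ s, F x s ∂volume ∂ν := by
        exact lintegral_congr fun x => inner1 x
    _ = ∫⁻ s, ∫⁻ x in Set.Ici (0:ℝ), F x s ∂ν ∂volume :=
        lintegral_lintegral_swap hmeas.aemeasurable
    _ = ∫⁻ s, ENNReal.ofReal (t * Real.exp (-t * s)) * ν (Set.Icc 0 s) := by
        refine lintegral_congr fun s => ?_
        have hfun : (fun x => F x s)
            = (Set.Iic s).indicator (fun _ => ENNReal.ofReal (t * Real.exp (-t * s))) := by
          funext x
          by_cases hxs : x ≤ s <;> simp [hF, Set.indicator, hxs]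
        rw [hfun, lintegral_indicator_const measurableSet_Iic,
          Measure.restrict_apply measurableSet_Iic, Set.inter_comm, Set.Ici_inter_Iic]

lemma gamma_tail {γ : ℝ} (hγ : 0 ≤ γ) {r : ℝ} (hr : 0 < r) (hr1 : r ≤ 1) :
    Real.Gamma (γ + 1) - r ≤ ∫ v in Set.Ioi r, Real.exp (-v) * v ^ γ := by
  have hg_int : IntegrableOn (fun v : ℝ => Real.exp (-v) * v ^ γ) (Set.Ioi (0:ℝ)) := by
    have := Real.GammaIntegral_convergent (show (0:ℝ) < γ + 1 by linarith)
    simpa using this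
  have hG : Real.Gamma (γ + 1) = ∫ v in Set.Ioi (0:ℝ), Real.exp (-v) * v ^ γ := by
    rw [Real.Gamma_eq_integral (show (0:ℝ) < γ + 1 by linarith)]
    simp
  have hsplit : ∫ v in Set.Ioi (0:ℝ), Real.exp (-v) * v ^ γ
      = (∫ v in Set.Ioc (0:ℝ) r, Real.exp (-v) * v ^ γ)
        + ∫ v in Set.Ioi r, Real.exp (-v) * v ^ γ := by
    rw [← setIntegral_union (Set.Ioc_disjoint_Ioi le_rfl) measurableSet_Ioi
        (hg_int.mono_set Set.Ioc_subset_Ioi_self)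
        (hg_int.mono_set (Set.Ioi_subset_Ioi hr.le)),
      Set.Ioc_union_Ioi_eq_Ioi hr.le]
  have hsmall : ∫ v in Set.Ioc (0:ℝ) r, Real.exp (-v) * v ^ γ ≤ r := by
    calc ∫ v in Set.Ioc (0:ℝ) r, Real.exp (-v) * v ^ γ
        ≤ ∫ _v in Set.Ioc (0:ℝ) r, (1:ℝ) := by
          refine setIntegral_mono_on (hg_int.mono_set Set.Ioc_subset_Ioi_self)
            (integrableOn_const measure_Ioc_lt_top.ne) measurableSet_Ioc ?_
          intro v hv
          have h1 : Real.exp (-v) ≤ 1 := Real.exp_le_one_iff.2 (by linarith [hv.1])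
          have h2 : v ^ γ ≤ 1 := Real.rpow_le_one hv.1.le (hv.2.trans hr1) hγ
          have h3 : 0 ≤ v ^ γ := Real.rpow_nonneg hv.1.le γ
          nlinarith [Real.exp_pos (-v)]
      _ = r := by simp [Real.volume_Ioc, hr.le]
  linarith [hG, hsplit, hsmall]

/-- One-sided Abelian estimate (liminf version): if `liminf_{a→∞} ν([0,a])/a^γ ≥ c`,
then `liminf_{t→0⁺} t^γ ∫_{[0,∞)} e^{-tx} dν(x) ≥ c Γ(γ+1)`. -/
theorem abelian_liminf
    (ν : Measure ℝ) [SigmaFinite ν] (hν : ν (Set.Iio 0) = 0)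
    (γ c : ℝ) (hγ : 0 ≤ γ) (hc : 0 ≤ c)
    (h : ENNReal.ofReal c ≤
      Filter.liminf (fun a : ℝ => ν (Set.Icc 0 a) / ENNReal.ofReal (a ^ γ)) atTop) :
    ENNReal.ofReal (c * Real.Gamma (γ + 1)) ≤
      Filter.liminf (fun t : ℝ =>
        ENNReal.ofReal (t ^ γ) *
          ∫⁻ x in Set.Ici (0:ℝ), ENNReal.ofReal (Real.exp (-t * x)) ∂ν)
      (nhdsWithin 0 (Set.Ioi 0)) := by
  have hΓ : 0 < Real.Gamma (γ + 1) := Real.Gamma_pos_of_pos (by linarith)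
  rcases eq_or_lt_of_le hc with hc0 | hc0
  · simp [← hc0]
  set Γ := Real.Gamma (γ + 1) with hΓdef
  have hg_int : IntegrableOn (fun v : ℝ => Real.exp (-v) * v ^ γ) (Set.Ioi (0:ℝ)) := by
    have := Real.GammaIntegral_convergent (show (0:ℝ) < γ + 1 by linarith)
    simpa using this
  rw [Filter.le_liminf_iff]
  intro b hb
  have hbtop : b ≠ ⊤ := (hb.trans ENNReal.ofReal_lt_top).ne
  set r := b.toReal with hrdef
  have hrb : r < c * Γ := (ENNReal.lt_ofReal_iff_toReal_lt hbtop).1 hb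
  have hr0 : 0 ≤ r := ENNReal.toReal_nonneg
  set ε := min (c/2) (min 1 (min (Γ/2) ((c * Γ - r)/(2*(c+Γ))))) with hεdef
  have hε0 : 0 < ε := by
    refine lt_min (by linarith) (lt_min one_pos (lt_min (by linarith) ?_))
    exact div_pos (by linarith) (by positivity)
  have hεc : ε ≤ c/2 := min_le_left _ _
  have hε1 : ε ≤ 1 := (min_le_right _ _).trans (min_le_left _ _)
  have hεΓ : ε ≤ Γ/2 := (min_le_right _ _).trans ((min_le_right _ _).trans (min_le_left _ _))
  have hεk : ε ≤ (c * Γ - r)/(2*(c+Γ)) :=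
    (min_le_right _ _).trans ((min_le_right _ _).trans (min_le_right _ _))
  have hεk' : ε * (2*(c+Γ)) ≤ c * Γ - r := by
    rw [← le_div_iff₀ (by positivity)]; exact hεk
  have hkey : r < (c - ε) * (Γ - ε) := by nlinarith [mul_self_nonneg ε]
  have hcε : 0 < c - ε := by linarith
  have hΓε : 0 < Γ - ε := by linarith
  -- get the threshold A
  have h1 : ENNReal.ofReal (c - ε) <
      Filter.liminf (fun a : ℝ => ν (Set.Icc 0 a) / ENNReal.ofReal (a ^ γ)) atTop :=
    lt_of_lt_of_le ((ENNReal.ofReal_lt_ofReal_iff hc0).2 (by linarith)) h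
  have h2 := Filter.eventually_lt_of_lt_liminf h1
  rw [Filter.eventually_atTop] at h2
  obtain ⟨A0, hA0⟩ := h2
  set A := max A0 1 with hAdef
  have hA1 : (1:ℝ) ≤ A := le_max_right _ _
  have hApos : (0:ℝ) < A := by linarith
  have hAν : ∀ a : ℝ, A ≤ a → ENNReal.ofReal ((c - ε) * a ^ γ) ≤ ν (Set.Icc 0 a) := by
    intro a ha
    have haA : 0 < a := lt_of_lt_of_le hApos ha
    have hpow : 0 < a ^ γ := Real.rpow_pos_of_pos haA γ
    have h3 := (hA0 a ((le_max_left _ _).trans ha)).le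
    rw [ENNReal.le_div_iff_mul_le (Or.inl (by simp [hpow])) (Or.inl ENNReal.ofReal_ne_top)] at h3
    calc ENNReal.ofReal ((c - ε) * a ^ γ)
        = ENNReal.ofReal (c - ε) * ENNReal.ofReal (a ^ γ) := ENNReal.ofReal_mul (by linarith)
      _ ≤ ν (Set.Icc 0 a) := h3
  set t1 := ε / A with ht1def
  have ht1 : 0 < t1 := div_pos hε0 hApos
  filter_upwards [Ioo_mem_nhdsGT_of_mem (Set.left_mem_Ico.2 ht1)] with t ht
  obtain ⟨ht0, htlt⟩ := ht
  have htA : t * A < ε := by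
    rw [ht1def] at htlt
    calc t * A < (ε / A) * A := by
          exact mul_lt_mul_of_pos_right htlt hApos
      _ = ε := div_mul_cancel₀ _ hApos.ne'
  have htA0 : 0 < t * A := mul_pos ht0 hApos
  have tail : Γ - ε ≤ ∫ v in Set.Ioi (t * A), Real.exp (-v) * v ^ γ := by
    have := gamma_tail hγ htA0 (htA.le.trans hε1)
    linarith
  -- integrability of the substituted function
  have hsub_int : IntegrableOn (fun s : ℝ => t * (Real.exp (-(t * s)) * (t * s) ^ γ))
      (Set.Ioi A) := by
    have h4 : IntegrableOn (fun v : ℝ => Real.exp (-v) * v ^ γ) (Set.Ioi (t * A)) :=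
      hg_int.mono_set (Set.Ioi_subset_Ioi htA0.le)
    exact ((integrableOn_Ioi_comp_mul_left_iff (fun v : ℝ => Real.exp (-v) * v ^ γ) A ht0).2
      h4).const_mul t
  have hsub_nn : 0 ≤ᵐ[volume.restrict (Set.Ioi A)]
      fun s : ℝ => t * (Real.exp (-(t * s)) * (t * s) ^ γ) := by
    refine (ae_restrict_iff' measurableSet_Ioi).2 (Filter.Eventually.of_forall fun s hs => ?_)
    have hs0 : 0 < s := lt_of_lt_of_le hApos (le_of_lt hs)
    have : 0 ≤ (t * s) ^ γ := Real.rpow_nonneg (by positivity) γ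
    positivity
  have hsubcalc : ∫ s in Set.Ioi A, t * (Real.exp (-(t * s)) * (t * s) ^ γ)
      = ∫ v in Set.Ioi (t * A), Real.exp (-v) * v ^ γ := by
    rw [integral_const_mul, integral_comp_mul_left_Ioi (fun v => Real.exp (-v) * v ^ γ) A ht0,
      smul_eq_mul, ← mul_assoc, mul_inv_cancel₀ ht0.ne', one_mul]
  have main : ENNReal.ofReal ((c - ε) * (Γ - ε)) ≤
      ENNReal.ofReal (t ^ γ) *
        ∫⁻ x in Set.Ici (0:ℝ), ENNReal.ofReal (Real.exp (-t * x)) ∂ν := by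
    calc ENNReal.ofReal ((c - ε) * (Γ - ε))
        = ENNReal.ofReal (c - ε) * ENNReal.ofReal (Γ - ε) := ENNReal.ofReal_mul hcε.le
      _ ≤ ENNReal.ofReal (c - ε) *
            ENNReal.ofReal (∫ v in Set.Ioi (t * A), Real.exp (-v) * v ^ γ) :=
          mul_le_mul_right (ENNReal.ofReal_le_ofReal tail) _
      _ = ENNReal.ofReal (c - ε) *
            ENNReal.ofReal (∫ s in Set.Ioi A, t * (Real.exp (-(t * s)) * (t * s) ^ γ)) := by
          rw [hsubcalc]
      _ = ENNReal.ofReal (c - ε) *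
            ∫⁻ s in Set.Ioi A, ENNReal.ofReal (t * (Real.exp (-(t * s)) * (t * s) ^ γ)) := by
          rw [ofReal_integral_eq_lintegral_ofReal hsub_int hsub_nn]
      _ = ENNReal.ofReal (t ^ γ) *
            ∫⁻ s in Set.Ioi A,
              ENNReal.ofReal (t * Real.exp (-t * s)) * ENNReal.ofReal ((c - ε) * s ^ γ) := by
          rw [← lintegral_const_mul' (ENNReal.ofReal (c - ε)) _ ENNReal.ofReal_ne_top,
            ← lintegral_const_mul' (ENNReal.ofReal (t ^ γ)) _ ENNReal.ofReal_ne_top]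
          refine setLIntegral_congr_fun measurableSet_Ioi
            (fun s hs => ?_)
          have hs0 : 0 < s := lt_of_lt_of_le hApos (le_of_lt hs)
          have h5 : 0 ≤ t * Real.exp (-t * s) := by positivity
          rw [← ENNReal.ofReal_mul hcε.le, ← ENNReal.ofReal_mul h5,
            ← ENNReal.ofReal_mul (by positivity)]
          congr 1
          rw [Real.mul_rpow ht0.le hs0.le, neg_mul]
          ring
      _ ≤ ENNReal.ofReal (t ^ γ) *
            ∫⁻ s in Set.Ioi A, ENNReal.ofReal (t * Real.exp (-t * s)) * ν (Set.Icc 0 s) := by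
          refine mul_le_mul_right (setLIntegral_mono' measurableSet_Ioi fun s hs => ?_) _
          exact mul_le_mul_right (hAν s (le_of_lt hs)) _
      _ ≤ ENNReal.ofReal (t ^ γ) *
            ∫⁻ s, ENNReal.ofReal (t * Real.exp (-t * s)) * ν (Set.Icc 0 s) :=
          mul_le_mul_right (setLIntegral_le_lintegral _ _) _
      _ = ENNReal.ofReal (t ^ γ) *
            ∫⁻ x in Set.Ici (0:ℝ), ENNReal.ofReal (Real.exp (-t * x)) ∂ν := by
          rw [laplace_layercake ν ht0]
  refine lt_of_lt_of_le ?_ main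
  rw [← ENNReal.ofReal_toReal hbtop]
  exact (ENNReal.ofReal_lt_ofReal_iff (by positivity)).2 hkey
end

section
/- Let ν be a nonnegative σ-finite Borel measure on [0,∞) and γ ≥ 0. If limsup_{t→0⁺} t^γ ∫_{[0,∞)} e^{-st} dν(s) ≤ C₀ < ∞, then limsup_{λ→∞} ν([0,λ])/λ^γ ≤ e·C₀. -/
open MeasureTheory Filter Set Real

/-- One-sided Tauberian estimate: if `limsup_{t→0⁺} t^γ ∫ e^{-st} dν(s) ≤ C₀ < ∞`,
then `limsup_{λ→∞} ν([0,λ])/λ^γ ≤ e C₀`. -/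
theorem tauberian_limsup
    (ν : Measure ℝ) [SigmaFinite ν] (hν : ν (Set.Iio 0) = 0)
    (γ C₀ : ℝ) (hγ : 0 ≤ γ) (hC₀ : 0 ≤ C₀)
    (h : Filter.limsup (fun t : ℝ =>
        ENNReal.ofReal (t ^ γ) *
          ∫⁻ s in Set.Ici (0:ℝ), ENNReal.ofReal (Real.exp (-s * t)) ∂ν)
      (nhdsWithin 0 (Set.Ioi 0)) ≤ ENNReal.ofReal C₀) :
    Filter.limsup (fun lam : ℝ => ν (Set.Icc 0 lam) / ENNReal.ofReal (lam ^ γ)) atTop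
      ≤ ENNReal.ofReal (Real.exp 1 * C₀) := by
  set F : ℝ → ENNReal := fun t : ℝ =>
    ENNReal.ofReal (t ^ γ) *
      ∫⁻ s in Set.Ici (0:ℝ), ENNReal.ofReal (Real.exp (-s * t)) ∂ν with hF
  have key : ∀ lam : ℝ, 0 < lam →
      ν (Set.Icc 0 lam) / ENNReal.ofReal (lam ^ γ)
        ≤ ENNReal.ofReal (Real.exp 1) * F lam⁻¹ := by
    intro lam hlam
    have hlamγ : (0:ℝ) < lam ^ γ := Real.rpow_pos_of_pos hlam γ
    have hIle : ENNReal.ofReal (Real.exp (-1)) * ν (Set.Icc 0 lam)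
        ≤ ∫⁻ s in Set.Ici (0:ℝ), ENNReal.ofReal (Real.exp (-s * lam⁻¹)) ∂ν := by
      calc ENNReal.ofReal (Real.exp (-1)) * ν (Set.Icc 0 lam)
          = ∫⁻ _ in Set.Icc 0 lam, ENNReal.ofReal (Real.exp (-1)) ∂ν := by
            rw [setLIntegral_const]
        _ ≤ ∫⁻ s in Set.Icc 0 lam, ENNReal.ofReal (Real.exp (-s * lam⁻¹)) ∂ν := by
            apply setLIntegral_mono' measurableSet_Icc
            intro s hs
            apply ENNReal.ofReal_le_ofReal
            apply Real.exp_le_exp.2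
            have h1 : s * lam⁻¹ ≤ 1 := by
              have := mul_le_mul_of_nonneg_right hs.2 (inv_nonneg.2 hlam.le)
              rwa [mul_inv_cancel₀ hlam.ne'] at this
            nlinarith
        _ ≤ ∫⁻ s in Set.Ici (0:ℝ), ENNReal.ofReal (Real.exp (-s * lam⁻¹)) ∂ν :=
            lintegral_mono_set (fun s hs => hs.1)
    have hinv : ENNReal.ofReal ((lam⁻¹) ^ γ) = (ENNReal.ofReal (lam ^ γ))⁻¹ := by
      rw [Real.inv_rpow hlam.le, ENNReal.ofReal_inv_of_pos hlamγ]
    have hee : ENNReal.ofReal (Real.exp 1) * ENNReal.ofReal (Real.exp (-1)) = 1 := by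
      rw [← ENNReal.ofReal_mul (Real.exp_pos 1).le, ← Real.exp_add]
      norm_num
    have h2 : ENNReal.ofReal ((lam⁻¹) ^ γ) * (ENNReal.ofReal (Real.exp (-1)) * ν (Set.Icc 0 lam))
        ≤ F lam⁻¹ := mul_le_mul_right hIle _
    calc ν (Set.Icc 0 lam) / ENNReal.ofReal (lam ^ γ)
        = ENNReal.ofReal ((lam⁻¹) ^ γ) * ν (Set.Icc 0 lam) := by
          rw [div_eq_mul_inv, hinv, mul_comm]
      _ = ENNReal.ofReal (Real.exp 1) * (ENNReal.ofReal ((lam⁻¹) ^ γ) *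
            (ENNReal.ofReal (Real.exp (-1)) * ν (Set.Icc 0 lam))) := by
          rw [show ENNReal.ofReal (Real.exp 1) * (ENNReal.ofReal ((lam⁻¹) ^ γ) *
              (ENNReal.ofReal (Real.exp (-1)) * ν (Set.Icc 0 lam)))
            = (ENNReal.ofReal (Real.exp 1) * ENNReal.ofReal (Real.exp (-1))) *
              (ENNReal.ofReal ((lam⁻¹) ^ γ) * ν (Set.Icc 0 lam)) by ring, hee, one_mul]
      _ ≤ ENNReal.ofReal (Real.exp 1) * F lam⁻¹ := mul_le_mul_right h2 _
  have hle : Filter.limsup (fun lam : ℝ => ν (Set.Icc 0 lam) / ENNReal.ofReal (lam ^ γ)) atTop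
      ≤ Filter.limsup (fun lam : ℝ => ENNReal.ofReal (Real.exp 1) * F lam⁻¹) atTop := by
    exact Filter.limsup_le_limsup (by
      filter_upwards [eventually_gt_atTop (0:ℝ)] with lam hlam using key lam hlam)
  refine hle.trans ?_
  have hmul : Filter.limsup (fun lam : ℝ => ENNReal.ofReal (Real.exp 1) * F lam⁻¹) atTop
      = ENNReal.ofReal (Real.exp 1) * Filter.limsup (fun lam : ℝ => F lam⁻¹) atTop :=
    ENNReal.limsup_const_mul_of_ne_top ENNReal.ofReal_ne_top
  rw [hmul]
  have hcomp : Filter.limsup (fun lam : ℝ => F lam⁻¹) atTop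
      ≤ Filter.limsup F (nhdsWithin 0 (Set.Ioi 0)) := by
    have hmap : Filter.map (fun lam : ℝ => lam⁻¹) atTop ≤ nhdsWithin 0 (Set.Ioi 0) :=
      tendsto_inv_atTop_nhdsGT_zero
    calc Filter.limsup (fun lam : ℝ => F lam⁻¹) atTop
        = Filter.limsup F (Filter.map (fun lam : ℝ => lam⁻¹) atTop) :=
          Filter.limsup_comp F (fun lam : ℝ => lam⁻¹) atTop
      _ ≤ Filter.limsup F (nhdsWithin 0 (Set.Ioi 0)) :=
          Filter.limsup_le_limsup_of_le hmap
  calc ENNReal.ofReal (Real.exp 1) * Filter.limsup (fun lam : ℝ => F lam⁻¹) atTop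
      ≤ ENNReal.ofReal (Real.exp 1) * ENNReal.ofReal C₀ := by
        gcongr
        exact hcomp.trans h
    _ = ENNReal.ofReal (Real.exp 1 * C₀) := (ENNReal.ofReal_mul (Real.exp_pos 1).le).symm
end

section
/- Let ν be a nonnegative σ-finite Borel measure on [0,∞) and γ ≥ 0. If liminf_{t→0⁺} t^γ ∫_{[0,∞)} e^{-st} dν(s) > 0 and limsup_{t→0⁺} t^γ ∫_{[0,∞)} e^{-st} dν(s) < ∞, then liminf_{λ→∞} ν([0,λ])/λ^γ > 0. -/
open MeasureTheory Filter Set Real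
open scoped ENNReal

/-- One-sided Tauberian positivity: if `liminf_{t→0⁺} t^γ ∫ e^{-st} dν(s) > 0` and
`limsup_{t→0⁺} t^γ ∫ e^{-st} dν(s) < ∞`, then `liminf_{λ→∞} ν([0,λ])/λ^γ > 0`. -/
theorem tauberian_liminf_pos
    (ν : Measure ℝ) [SigmaFinite ν] (hν : ν (Set.Iio 0) = 0)
    (γ : ℝ) (hγ : 0 ≤ γ)
    (h1 : 0 < Filter.liminf (fun t : ℝ =>
        ENNReal.ofReal (t ^ γ) *
          ∫⁻ s in Set.Ici (0:ℝ), ENNReal.ofReal (Real.exp (-s * t)) ∂ν)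
      (nhdsWithin 0 (Set.Ioi 0)))
    (h2 : Filter.limsup (fun t : ℝ =>
        ENNReal.ofReal (t ^ γ) *
          ∫⁻ s in Set.Ici (0:ℝ), ENNReal.ofReal (Real.exp (-s * t)) ∂ν)
      (nhdsWithin 0 (Set.Ioi 0)) < ⊤) :
    0 < Filter.liminf (fun lam : ℝ => ν (Set.Icc 0 lam) / ENNReal.ofReal (lam ^ γ))
      atTop := by
  set L : ℝ → ℝ≥0∞ := fun t =>
    ∫⁻ s in Set.Ici (0:ℝ), ENNReal.ofReal (Real.exp (-s * t)) ∂ν with hLdef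
  set F : ℝ → ℝ≥0∞ := fun t => ENNReal.ofReal (t ^ γ) * L t with hFdef
  set Λ : ℝ≥0∞ := Filter.liminf F (nhdsWithin 0 (Set.Ioi 0)) with hΛdef
  set mE : ℝ≥0∞ := (min 1 Λ) / 2 with hmEdef
  have hmin_pos : 0 < min 1 Λ := lt_min one_pos h1
  have hmin_top : min 1 Λ ≠ ⊤ := ne_top_of_le_ne_top ENNReal.one_ne_top (min_le_left _ _)
  have hmE_pos : 0 < mE := ENNReal.div_pos hmin_pos.ne' ENNReal.ofNat_ne_top
  have hmE_lt : mE < Λ := lt_of_lt_of_le (ENNReal.half_lt_self hmin_pos.ne' hmin_top)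
    (min_le_right _ _)
  have hmE_top : mE ≠ ⊤ := by
    refine ne_top_of_le_ne_top ENNReal.one_ne_top ?_
    calc mE ≤ (1:ℝ≥0∞)/2 := ENNReal.div_le_div_right (min_le_left _ _) _
      _ ≤ 1 := by norm_num
  set mr : ℝ := mE.toReal with hmrdef
  have hmr_pos : 0 < mr := ENNReal.toReal_pos hmE_pos.ne' hmE_top
  have hmE_eq : mE = ENNReal.ofReal mr := (ENNReal.ofReal_toReal hmE_top).symm
  set B : ℝ≥0∞ := Filter.limsup F (nhdsWithin 0 (Set.Ioi 0)) + 1 with hBdef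
  have hB_top : B ≠ ⊤ := by
    simp [hBdef, ENNReal.add_ne_top, h2.ne]
  set b : ℝ := B.toReal with hbdef
  have hb_nonneg : 0 ≤ b := ENNReal.toReal_nonneg
  have hB_eq : B = ENNReal.ofReal b := (ENNReal.ofReal_toReal hB_top).symm
  have hFm : ∀ᶠ t in nhdsWithin 0 (Set.Ioi 0), mE < F t :=
    Filter.eventually_lt_of_lt_liminf hmE_lt
  have hFB : ∀ᶠ t in nhdsWithin 0 (Set.Ioi 0), F t < B :=
    Filter.eventually_lt_of_limsup_lt (ENNReal.lt_add_right h2.ne one_ne_zero)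
  -- choose c
  have hc_ex : ∃ c : ℝ, 1 ≤ c ∧ 2 ^ γ * b * Real.exp (-(c/2)) ≤ mr / 2 := by
    have h0 : Filter.Tendsto (fun c : ℝ => 2 ^ γ * b * Real.exp (-(c/2))) atTop (nhds 0) := by
      have h1' : Filter.Tendsto (fun c : ℝ => Real.exp (-(c/2))) atTop (nhds 0) :=
        Real.tendsto_exp_atBot.comp
          (Filter.tendsto_neg_atBot_iff.mpr (tendsto_id.atTop_div_const two_pos))
      simpa using h1'.const_mul (2 ^ γ * b)
    have hev := h0.eventually_le_const (by positivity : (0:ℝ) < mr / 2)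
    obtain ⟨c, hc⟩ := (hev.and (Filter.eventually_ge_atTop 1)).exists
    exact ⟨c, hc.2, hc.1⟩
  obtain ⟨c, hc1, hc⟩ := hc_ex
  have hc0 : 0 < c := lt_of_lt_of_le one_pos hc1
  -- extract δ from the eventual bounds
  obtain ⟨δ, hδmem, hδ⟩ := mem_nhdsGT_iff_exists_Ioo_subset.mp (hFm.and hFB)
  have hδ0 : 0 < δ := hδmem
  -- the key pointwise bound for large λ
  have key : ∀ lam : ℝ, max 1 (2 * c / δ) ≤ lam →
      ENNReal.ofReal (mr / 2 / c ^ γ) ≤ ν (Set.Icc 0 lam) / ENNReal.ofReal (lam ^ γ) := by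
    intro lam hlam
    have hlam1 : (1:ℝ) ≤ lam := le_trans (le_max_left _ _) hlam
    have hlam0 : 0 < lam := lt_of_lt_of_le one_pos hlam1
    set t : ℝ := c / lam with htdef
    have ht0 : 0 < t := div_pos hc0 hlam0
    have htδ : t < δ := by
      have h2cδ : 2 * c / δ ≤ lam := le_trans (le_max_right _ _) hlam
      have h2c : 2 * c ≤ lam * δ := (div_le_iff₀ hδ0).mp h2cδ
      rw [htdef, div_lt_iff₀ hlam0]
      nlinarith
    have ht2 : t / 2 ∈ Set.Ioo (0:ℝ) δ := ⟨by positivity, by linarith⟩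
    have htmem : t ∈ Set.Ioo (0:ℝ) δ := ⟨ht0, htδ⟩
    have hFt := (hδ htmem).1
    have hFt2 := (hδ ht2).2
    -- Step A : L t ≤ ν (Icc 0 lam) + exp(-(lam*t)/2) * L (t/2)
    have hsplit : Set.Icc (0:ℝ) lam ∪ Set.Ioi lam = Set.Ici 0 :=
      Set.Icc_union_Ioi_eq_Ici hlam0.le
    have hdisj : Disjoint (Set.Icc (0:ℝ) lam) (Set.Ioi lam) := by
      refine Set.disjoint_left.mpr fun x hx hx' => ?_
      exact absurd hx.2 (not_le.mpr hx')
    have hA : L t ≤ ν (Set.Icc 0 lam)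
        + ENNReal.ofReal (Real.exp (-(lam * t) / 2)) * L (t / 2) := by
      have hLsplit : L t = (∫⁻ s in Set.Icc (0:ℝ) lam, ENNReal.ofReal (Real.exp (-s * t)) ∂ν)
          + ∫⁻ s in Set.Ioi lam, ENNReal.ofReal (Real.exp (-s * t)) ∂ν := by
        show (∫⁻ s in Set.Ici (0:ℝ), ENNReal.ofReal (Real.exp (-s * t)) ∂ν) = _
        rw [← hsplit, lintegral_union measurableSet_Ioi hdisj]
      rw [hLsplit]
      gcongr
      · -- first integral ≤ ν (Icc 0 lam)
        calc (∫⁻ s in Set.Icc (0:ℝ) lam, ENNReal.ofReal (Real.exp (-s * t)) ∂ν)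
            ≤ ∫⁻ _ in Set.Icc (0:ℝ) lam, 1 ∂ν := by
              refine setLIntegral_mono measurable_const fun s hs => ?_
              rw [← ENNReal.ofReal_one]
              exact ENNReal.ofReal_le_ofReal
                (Real.exp_le_one_iff.mpr (by nlinarith [hs.1, ht0.le]))
          _ = ν (Set.Icc 0 lam) := setLIntegral_one _
      · -- tail bound
        calc (∫⁻ s in Set.Ioi lam, ENNReal.ofReal (Real.exp (-s * t)) ∂ν)
            ≤ ∫⁻ s in Set.Ioi lam,
                ENNReal.ofReal (Real.exp (-(lam * t) / 2)) *
                  ENNReal.ofReal (Real.exp (-s * (t / 2))) ∂ν := by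
              refine setLIntegral_mono (by fun_prop) fun s hs => ?_
              rw [← ENNReal.ofReal_mul (Real.exp_nonneg _), ← Real.exp_add]
              refine ENNReal.ofReal_le_ofReal (Real.exp_le_exp.mpr ?_)
              have hs' : lam < s := hs
              nlinarith [ht0.le]
          _ = ENNReal.ofReal (Real.exp (-(lam * t) / 2)) *
                ∫⁻ s in Set.Ioi lam, ENNReal.ofReal (Real.exp (-s * (t / 2))) ∂ν :=
              lintegral_const_mul' _ _ ENNReal.ofReal_ne_top
          _ ≤ ENNReal.ofReal (Real.exp (-(lam * t) / 2)) * L (t / 2) := by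
              gcongr
              exact lintegral_mono_set (fun x hx => le_of_lt (lt_of_lt_of_le hlam0 (le_of_lt hx)))
    -- Step B : multiply by ofReal (t ^ γ)
    have htγpos : 0 < t ^ γ := Real.rpow_pos_of_pos ht0 γ
    have ht2γpos : 0 < (t/2) ^ γ := Real.rpow_pos_of_pos (by positivity) γ
    have hlt : lam * t = c := by rw [htdef]; field_simp
    have htγsplit : ENNReal.ofReal (t ^ γ)
        = ENNReal.ofReal ((2:ℝ) ^ γ) * ENNReal.ofReal ((t/2) ^ γ) := by
      rw [← ENNReal.ofReal_mul (by positivity)]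
      congr 1
      rw [← Real.mul_rpow (by norm_num) (by positivity)]
      congr 1
      ring
    have hB2 : ENNReal.ofReal (t ^ γ) *
        (ENNReal.ofReal (Real.exp (-(lam * t) / 2)) * L (t / 2))
        ≤ ENNReal.ofReal (mr / 2) := by
      have : ENNReal.ofReal (t ^ γ) * (ENNReal.ofReal (Real.exp (-(lam * t) / 2)) * L (t / 2))
          = ENNReal.ofReal (Real.exp (-(lam * t) / 2)) * (ENNReal.ofReal ((2:ℝ) ^ γ) * F (t/2)) := by
        rw [hFdef, htγsplit]; ring
      rw [this]
      calc ENNReal.ofReal (Real.exp (-(lam * t) / 2)) * (ENNReal.ofReal ((2:ℝ) ^ γ) * F (t/2))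
          ≤ ENNReal.ofReal (Real.exp (-(lam * t) / 2)) * (ENNReal.ofReal ((2:ℝ) ^ γ) *
              ENNReal.ofReal b) := by gcongr; rw [← hB_eq]; exact hFt2.le
        _ = ENNReal.ofReal (2 ^ γ * b * Real.exp (-(c/2))) := by
            rw [hlt, ← ENNReal.ofReal_mul (by positivity), ← ENNReal.ofReal_mul (Real.exp_nonneg _)]
            congr 1
            ring_nf
        _ ≤ ENNReal.ofReal (mr / 2) := ENNReal.ofReal_le_ofReal hc
    have hmain : ENNReal.ofReal (mr / 2) ≤ ENNReal.ofReal (t ^ γ) * ν (Set.Icc 0 lam) := by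
      have hstep : mE ≤ ENNReal.ofReal (t ^ γ) * ν (Set.Icc 0 lam) + ENNReal.ofReal (mr / 2) := by
        calc mE ≤ F t := hFt.le
          _ = ENNReal.ofReal (t ^ γ) * L t := rfl
          _ ≤ ENNReal.ofReal (t ^ γ) * (ν (Set.Icc 0 lam)
              + ENNReal.ofReal (Real.exp (-(lam * t) / 2)) * L (t / 2)) := by gcongr
          _ = ENNReal.ofReal (t ^ γ) * ν (Set.Icc 0 lam)
              + ENNReal.ofReal (t ^ γ) * (ENNReal.ofReal (Real.exp (-(lam * t) / 2)) * L (t / 2)) := by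
              ring
          _ ≤ ENNReal.ofReal (t ^ γ) * ν (Set.Icc 0 lam) + ENNReal.ofReal (mr / 2) := by
              gcongr
      have := tsub_le_iff_right.mpr (hmE_eq ▸ hstep)
      calc ENNReal.ofReal (mr / 2) = ENNReal.ofReal mr - ENNReal.ofReal (mr / 2) := by
            rw [← ENNReal.ofReal_sub _ (by positivity)]
            congr 1
            ring
        _ ≤ ENNReal.ofReal (t ^ γ) * ν (Set.Icc 0 lam) := this
    -- Step C : conclude
    rw [ENNReal.le_div_iff_mul_le
      (Or.inl (ENNReal.ofReal_pos.mpr (Real.rpow_pos_of_pos hlam0 γ)).ne')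
      (Or.inl ENNReal.ofReal_ne_top)]
    rw [← ENNReal.ofReal_mul (by positivity)]
    have heq : mr / 2 / c ^ γ * lam ^ γ = mr / 2 / t ^ γ := by
        rw [htdef, Real.div_rpow hc0.le hlam0.le]
        have hcγ : (0:ℝ) < c ^ γ := Real.rpow_pos_of_pos hc0 γ
        have hlγ : (0:ℝ) < lam ^ γ := Real.rpow_pos_of_pos hlam0 γ
        field_simp
    rw [heq]
    rw [← ENNReal.mul_le_mul_iff_left (c := ENNReal.ofReal (t ^ γ))
        (ENNReal.ofReal_pos.mpr htγpos).ne' ENNReal.ofReal_ne_top]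
    calc ENNReal.ofReal (mr / 2 / t ^ γ) * ENNReal.ofReal (t ^ γ)
          = ENNReal.ofReal (mr / 2) := by
            rw [← ENNReal.ofReal_mul (by positivity)]
            congr 1
            field_simp
        _ ≤ ENNReal.ofReal (t ^ γ) * ν (Set.Icc 0 lam) := hmain
        _ = ν (Set.Icc 0 lam) * ENNReal.ofReal (t ^ γ) := mul_comm _ _
  -- conclude via liminf
  have hle : ENNReal.ofReal (mr / 2 / c ^ γ) ≤
      Filter.liminf (fun lam : ℝ => ν (Set.Icc 0 lam) / ENNReal.ofReal (lam ^ γ)) atTop := by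
    refine Filter.le_liminf_of_le (by isBoundedDefault) ?_
    filter_upwards [Filter.eventually_ge_atTop (max 1 (2 * c / δ))] with lam hlam
    exact key lam hlam
  refine lt_of_lt_of_le ?_ hle
  have : (0:ℝ) < mr / 2 / c ^ γ := by
    have := Real.rpow_pos_of_pos hc0 γ
    positivity
  exact ENNReal.ofReal_pos.mpr this
end

section
/- Let ν be a nonnegative σ-finite Borel measure on [0,∞), γ > 0, and D ≥ 0. If lim_{t→0⁺} t^γ ∫_{[0,∞)} e^{-tx} dν(x) = D, then lim_{a→∞} ν([0,a))/a^γ = D/Γ(γ+1). -/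
open MeasureTheory Filter Set Real

section KT
variable (ν : Measure ℝ)

/-- Monotonicity of the Laplace transform. -/
lemma kt_mono {s t : ℝ} (hs : 0 < s) (hst : s ≤ t) :
    ∫⁻ x in Ici 0, ENNReal.ofReal (exp (-t*x)) ∂ν
      ≤ ∫⁻ x in Ici 0, ENNReal.ofReal (exp (-s*x)) ∂ν := by
  refine lintegral_mono_ae ?_
  filter_upwards [ae_restrict_mem measurableSet_Ici] with x hx
  exact ENNReal.ofReal_le_ofReal (exp_le_exp.2 (by nlinarith [mem_Ici.1 hx]))

lemma kt_fin {γ D : ℝ} (hγ : 0 < γ)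
    (h : Tendsto (fun t : ℝ =>
        ENNReal.ofReal (t ^ γ) *
          ∫⁻ x in Set.Ici (0:ℝ), ENNReal.ofReal (Real.exp (-t * x)) ∂ν)
      (nhdsWithin 0 (Set.Ioi 0)) (nhds (ENNReal.ofReal D))) :
    ∀ t : ℝ, 0 < t → ∫⁻ x in Ici 0, ENNReal.ofReal (exp (-t*x)) ∂ν < ⊤ := by
  intro t ht
  have hev : ∀ᶠ s in nhdsWithin (0:ℝ) (Ioi 0),
      ENNReal.ofReal (s ^ γ) * ∫⁻ x in Ici 0, ENNReal.ofReal (exp (-s*x)) ∂ν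
        < ENNReal.ofReal D + 1 :=
    h.eventually_lt_const (ENNReal.lt_add_right ENNReal.ofReal_ne_top one_ne_zero)
  have hmem : Ioo (0:ℝ) t ∈ nhdsWithin (0:ℝ) (Ioi 0) :=
    Ioo_mem_nhdsGT_of_mem ⟨le_refl _, ht⟩
  obtain ⟨s, hs1, hs2⟩ := (hev.and (eventually_of_mem hmem (fun s hs => hs))).exists
  have hspos : 0 < s := hs2.1
  have hfin : ∫⁻ x in Ici 0, ENNReal.ofReal (exp (-s*x)) ∂ν < ⊤ := by
    by_contra hcon
    push_neg at hcon
    rw [top_le_iff] at hcon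
    rw [hcon, ENNReal.mul_top] at hs1
    · exact (lt_irrefl _ (hs1.trans_le le_top)).elim
    · simpa [ENNReal.ofReal_eq_zero, not_le] using (Real.rpow_pos_of_pos hspos γ)
  exact lt_of_le_of_lt (kt_mono ν hspos hs2.2.le) hfin

lemma kt_integrable {t : ℝ} (ht : 0 < t)
    (hfin : ∫⁻ x in Ici 0, ENNReal.ofReal (exp (-t*x)) ∂ν < ⊤) :
    IntegrableOn (fun x => exp (-t*x)) (Ici 0) ν := by
  refine ⟨(Continuous.aestronglyMeasurable (by continuity)), ?_⟩
  rw [hasFiniteIntegral_iff_ofReal ?_]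
  · exact hfin
  · exact ae_of_all _ (fun x => (exp_pos _).le)

lemma kt_Ico_fin {t : ℝ} (ht : 0 < t)
    (hfin : ∫⁻ x in Ici 0, ENNReal.ofReal (exp (-t*x)) ∂ν < ⊤) (a : ℝ) :
    ν (Ico 0 a) < ⊤ := by
  have h1 : ENNReal.ofReal (exp (-t*a)) * ν (Ico 0 a)
      ≤ ∫⁻ x in Ici 0, ENNReal.ofReal (exp (-t*x)) ∂ν := by
    rw [← setLIntegral_const]
    refine le_trans (lintegral_mono_ae ?_) (lintegral_mono_set Ico_subset_Ici_self)
    filter_upwards [ae_restrict_mem measurableSet_Ico] with x hx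
    exact ENNReal.ofReal_le_ofReal (exp_le_exp.2 (by nlinarith [hx.2, ht]))
  by_contra hcon
  push_neg at hcon
  rw [top_le_iff] at hcon
  rw [hcon, ENNReal.mul_top (by simpa [ENNReal.ofReal_eq_zero, not_le] using exp_pos (-t*a))] at h1
  exact (lt_irrefl _ ((top_le_iff.1 h1 ▸ hfin))).elim
end KT
section KT2
variable (ν : Measure ℝ) {γ D : ℝ}

lemma kt_tendsto_real (hγ : 0 < γ) (hD : 0 ≤ D)
    (h : Tendsto (fun t : ℝ =>
        ENNReal.ofReal (t ^ γ) *
          ∫⁻ x in Set.Ici (0:ℝ), ENNReal.ofReal (Real.exp (-t * x)) ∂ν)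
      (nhdsWithin 0 (Set.Ioi 0)) (nhds (ENNReal.ofReal D)))
    (hfin : ∀ t : ℝ, 0 < t → ∫⁻ x in Ici 0, ENNReal.ofReal (exp (-t*x)) ∂ν < ⊤) :
    Tendsto (fun t : ℝ => t ^ γ * ∫ x in Ici 0, exp (-t*x) ∂ν)
      (nhdsWithin 0 (Ioi 0)) (nhds D) := by
  have h2 := (ENNReal.tendsto_toReal ENNReal.ofReal_ne_top).comp h
  rw [ENNReal.toReal_ofReal hD] at h2
  refine h2.congr' ?_
  filter_upwards [self_mem_nhdsWithin] with t ht
  have ht' : (0:ℝ) < t := ht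
  have : ∫ x in Ici 0, exp (-t*x) ∂ν
      = (∫⁻ x in Ici 0, ENNReal.ofReal (exp (-t*x)) ∂ν).toReal := by
    rw [integral_eq_lintegral_of_nonneg_ae (ae_of_all _ (fun x => (exp_pos _).le))
      (Continuous.aestronglyMeasurable (by continuity))]
  rw [Function.comp_apply, ENNReal.toReal_mul, ENNReal.toReal_ofReal (rpow_nonneg ht'.le γ), this]

lemma kt_map_mul (c : ℝ) (hc : 0 < c) :
    Tendsto (fun t : ℝ => c * t) (nhdsWithin 0 (Ioi 0)) (nhdsWithin 0 (Ioi 0)) := by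
  refine tendsto_nhdsWithin_of_tendsto_nhds_of_eventually_within _ ?_ ?_
  · have h0 : Tendsto (fun t : ℝ => c * t) (nhds 0) (nhds 0) := by
      have : Continuous (fun t : ℝ => c * t) := by continuity
      simpa using this.tendsto 0
    exact h0.mono_left (nhdsWithin_le_nhds (s := Ioi (0:ℝ)))
  · filter_upwards [self_mem_nhdsWithin] with t ht
    exact mul_pos hc ht

lemma kt_tendsto_scaled (hγ : 0 < γ) (hD : 0 ≤ D)
    (h : Tendsto (fun t : ℝ =>
        ENNReal.ofReal (t ^ γ) *
          ∫⁻ x in Set.Ici (0:ℝ), ENNReal.ofReal (Real.exp (-t * x)) ∂ν)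
      (nhdsWithin 0 (Set.Ioi 0)) (nhds (ENNReal.ofReal D)))
    (hfin : ∀ t : ℝ, 0 < t → ∫⁻ x in Ici 0, ENNReal.ofReal (exp (-t*x)) ∂ν < ⊤)
    (k : ℕ) :
    Tendsto (fun t : ℝ => t ^ γ * ∫ x in Ici 0, exp (-(((k:ℝ)+1)*t)*x) ∂ν)
      (nhdsWithin 0 (Ioi 0)) (nhds (D / ((k:ℝ)+1) ^ γ)) := by
  have hc : (0:ℝ) < (k:ℝ)+1 := by positivity
  have h1 := (kt_tendsto_real ν hγ hD h hfin).comp (kt_map_mul ((k:ℝ)+1) hc)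
  have h2 := h1.const_mul ((((k:ℝ)+1) ^ γ)⁻¹)
  have hne : ((k:ℝ)+1) ^ γ ≠ 0 := (rpow_pos_of_pos hc γ).ne'
  rw [show (((k:ℝ)+1) ^ γ)⁻¹ * D = D / ((k:ℝ)+1)^γ by field_simp] at h2
  refine h2.congr' ?_
  filter_upwards [self_mem_nhdsWithin] with t ht
  have ht' : (0:ℝ) < t := ht
  rw [Function.comp_apply]
  rw [Real.mul_rpow hc.le ht'.le]
  field_simp

lemma kt_tendsto_Q (hγ : 0 < γ) (hD : 0 ≤ D)
    (h : Tendsto (fun t : ℝ =>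
        ENNReal.ofReal (t ^ γ) *
          ∫⁻ x in Set.Ici (0:ℝ), ENNReal.ofReal (Real.exp (-t * x)) ∂ν)
      (nhdsWithin 0 (Set.Ioi 0)) (nhds (ENNReal.ofReal D)))
    (hfin : ∀ t : ℝ, 0 < t → ∫⁻ x in Ici 0, ENNReal.ofReal (exp (-t*x)) ∂ν < ⊤)
    (c : ℕ → ℝ) (n : ℕ) :
    Tendsto (fun t : ℝ => t ^ γ *
        ∫ x in Ici 0, (∑ k ∈ Finset.range n, c k * exp (-t*x) ^ (k+1)) ∂ν)
      (nhdsWithin 0 (Ioi 0))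
      (nhds (D * ∑ k ∈ Finset.range n, c k / ((k:ℝ)+1) ^ γ)) := by
  have key : ∀ (k : ℕ) (t x : ℝ), exp (-t*x) ^ (k+1) = exp (-(((k:ℝ)+1)*t)*x) := by
    intro k t x
    rw [← Real.exp_nat_mul]
    push_cast
    ring_nf
  have hsum := tendsto_finset_sum (Finset.range n)
    (fun k _ => ((kt_tendsto_scaled ν hγ hD h hfin k).const_mul (c k)))
  have hlim : ∑ k ∈ Finset.range n, c k * (D / ((k:ℝ)+1) ^ γ)
      = D * ∑ k ∈ Finset.range n, c k / ((k:ℝ)+1) ^ γ := by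
    rw [Finset.mul_sum]
    exact Finset.sum_congr rfl (fun k _ => by ring)
  rw [hlim] at hsum
  refine hsum.congr' ?_
  filter_upwards [self_mem_nhdsWithin] with t ht
  have ht' : (0:ℝ) < t := ht
  have hrw : (fun x => ∑ k ∈ Finset.range n, c k * exp (-t*x) ^ (k+1))
      = fun x => ∑ k ∈ Finset.range n, c k * exp (-(((k:ℝ)+1)*t)*x) := by
    funext x
    exact Finset.sum_congr rfl (fun k _ => by rw [key])
  rw [hrw, integral_finset_sum _ (fun k _ => ?_), Finset.mul_sum]
  · exact Finset.sum_congr rfl (fun k _ => by rw [MeasureTheory.integral_const_mul]; ring)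
  · have hc : (0:ℝ) < ((k:ℝ)+1)*t := by positivity
    exact (kt_integrable ν hc (hfin _ hc)).const_mul (c k)
end KT2
section KT3
variable {γ : ℝ}

lemma kt_gamma_integrable (hγ : 0 < γ) (k : ℕ) :
    IntegrableOn (fun u : ℝ => u ^ (γ-1) * exp (-u) ^ (k+1)) (Ioi 0) := by
  refine Integrable.mono' (Real.GammaIntegral_convergent hγ)
    (((continuousOn_id.rpow_const (fun x hx => Or.inl (ne_of_gt hx))).mul
      ((continuousOn_id.neg.rexp).pow (k+1))).aestronglyMeasurable measurableSet_Ioi) ?_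
  · filter_upwards [ae_restrict_mem measurableSet_Ioi] with u hu
    have hu' : (0:ℝ) < u := hu
    rw [Real.norm_eq_abs, abs_of_nonneg (by positivity)]
    rw [← Real.exp_nat_mul]
    have : exp ((k+1 : ℕ) * -u) ≤ exp (-u) := by
      apply exp_le_exp.2
      have : (1:ℝ) ≤ (k+1:ℕ) := by exact_mod_cast Nat.one_le_iff_ne_zero.2 (Nat.succ_ne_zero k)
      nlinarith
    calc u ^ (γ-1) * exp ((k+1:ℕ) * -u) ≤ u ^ (γ-1) * exp (-u) := by
          apply mul_le_mul_of_nonneg_left this (by positivity)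
      _ = exp (-u) * u ^ (γ-1) := by ring

lemma kt_gamma_value (hγ : 0 < γ) (k : ℕ) :
    ∫ u in Ioi (0:ℝ), u ^ (γ-1) * exp (-u) ^ (k+1)
      = Real.Gamma γ / ((k:ℝ)+1) ^ γ := by
  have hc : (0:ℝ) < (k:ℝ)+1 := by positivity
  have h1 : ∀ u : ℝ, exp (-u) ^ (k+1) = exp (-(((k:ℝ)+1) * u)) := by
    intro u
    rw [← Real.exp_nat_mul]
    push_cast
    ring_nf
  simp_rw [h1]
  rw [integral_rpow_mul_exp_neg_mul_Ioi hγ hc]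
  rw [one_div, Real.inv_rpow hc.le, inv_mul_eq_div]
lemma kt_M_integrable (hγ : 0 < γ) (c : ℕ → ℝ) (n : ℕ) :
    IntegrableOn (fun u : ℝ => u ^ (γ-1) * ∑ k ∈ Finset.range n, c k * exp (-u) ^ (k+1))
      (Ioi 0) := by
  have : (fun u : ℝ => u ^ (γ-1) * ∑ k ∈ Finset.range n, c k * exp (-u) ^ (k+1))
      = fun u => ∑ k ∈ Finset.range n, c k * (u ^ (γ-1) * exp (-u) ^ (k+1)) := by
    funext u
    rw [Finset.mul_sum]
    exact Finset.sum_congr rfl (fun k _ => by ring)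
  rw [this]
  exact integrable_finset_sum _ (fun k _ => (kt_gamma_integrable hγ k).const_mul (c k))

lemma kt_M_eq (hγ : 0 < γ) (c : ℕ → ℝ) (n : ℕ) :
    ∫ u in Ioi (0:ℝ), u ^ (γ-1) * ∑ k ∈ Finset.range n, c k * exp (-u) ^ (k+1)
      = Real.Gamma γ * ∑ k ∈ Finset.range n, c k / ((k:ℝ)+1) ^ γ := by
  have h1 : (fun u : ℝ => u ^ (γ-1) * ∑ k ∈ Finset.range n, c k * exp (-u) ^ (k+1))
      = fun u => ∑ k ∈ Finset.range n, c k * (u ^ (γ-1) * exp (-u) ^ (k+1)) := by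
    funext u
    rw [Finset.mul_sum]
    exact Finset.sum_congr rfl (fun k _ => by ring)
  rw [h1, integral_finset_sum _
    (fun k _ => (kt_gamma_integrable hγ k).const_mul (c k)), Finset.mul_sum]
  refine Finset.sum_congr rfl (fun k _ => ?_)
  rw [MeasureTheory.integral_const_mul, kt_gamma_value hγ k]
  ring

lemma kt_ind_integrable (hγ : 0 < γ) {b : ℝ} (hb : 0 < b) :
    IntegrableOn (fun u : ℝ => (Ioc (0:ℝ) b).indicator (fun u => u ^ (γ-1)) u) (Ioi 0) := by
  have h1 : IntegrableOn (fun u : ℝ => u ^ (γ-1)) (Ioc 0 b) := by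
    rw [← intervalIntegrable_iff_integrableOn_Ioc_of_le hb.le]
    exact intervalIntegral.intervalIntegrable_rpow' (by linarith)
  exact (h1.integrable_indicator measurableSet_Ioc).integrableOn

lemma kt_ind_integral (hγ : 0 < γ) {b : ℝ} (hb : 0 < b) :
    ∫ u in Ioi (0:ℝ), (Ioc (0:ℝ) b).indicator (fun u => u ^ (γ-1)) u = b ^ γ / γ := by
  rw [setIntegral_indicator measurableSet_Ioc,
    Set.inter_eq_self_of_subset_right Ioc_subset_Ioi_self,
    ← intervalIntegral.integral_of_le hb.le,
    integral_rpow (Or.inl (by linarith))]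
  rw [sub_add_cancel, Real.zero_rpow hγ.ne']
  ring
end KT3

noncomputable section KT4

/-- Piecewise-linear ramp: `0` for `y ≤ a`, `1` for `y ≥ b`. -/
def ktRamp (a b y : ℝ) : ℝ := max 0 (min 1 ((y - a)/(b - a)))

lemma ktRamp_nonneg (a b y : ℝ) : 0 ≤ ktRamp a b y := le_max_left _ _

lemma ktRamp_le_one (a b y : ℝ) : ktRamp a b y ≤ 1 :=
  max_le zero_le_one (min_le_left _ _)

lemma ktRamp_eq_zero {a b y : ℝ} (hab : a < b) (hy : y ≤ a) : ktRamp a b y = 0 := by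
  have h1 : (y - a)/(b - a) ≤ 0 :=
    div_nonpos_of_nonpos_of_nonneg (by linarith) (by linarith)
  exact max_eq_left ((min_le_right _ _).trans h1)

lemma ktRamp_eq_one {a b y : ℝ} (hab : a < b) (hy : b ≤ y) : ktRamp a b y = 1 := by
  have h1 : (1:ℝ) ≤ (y - a)/(b - a) := by
    rw [le_div_iff₀ (by linarith)]
    linarith
  rw [ktRamp, min_eq_left h1, max_eq_right zero_le_one]

lemma continuous_ktRamp (a b : ℝ) : Continuous (fun y => ktRamp a b y) :=
  continuous_const.max (continuous_const.min ((continuous_id.sub continuous_const).div_const _))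

/-- The ramp divided by `y` (regularized). -/
def ktH (a b y : ℝ) : ℝ := ktRamp a b y / max y a

lemma continuous_ktH {a : ℝ} (b : ℝ) (ha : 0 < a) : Continuous (fun y => ktH a b y) :=
  (continuous_ktRamp a b).div (continuous_id.max continuous_const)
    (fun y => (lt_of_lt_of_le ha (le_max_right y a)).ne')

lemma ktH_nonneg {a : ℝ} (b : ℝ) (ha : 0 < a) (y : ℝ) : 0 ≤ ktH a b y :=
  div_nonneg (ktRamp_nonneg _ _ _) (le_trans ha.le (le_max_right _ _))

lemma mul_ktH_le {a y : ℝ} (b : ℝ) (ha : 0 < a) (hy : 0 ≤ y) :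
    y * ktH a b y ≤ ktRamp a b y := by
  rw [ktH, mul_div_assoc', div_le_iff₀ (lt_of_lt_of_le ha (le_max_right y a))]
  have h1 : y ≤ max y a := le_max_left _ _
  nlinarith [ktRamp_nonneg a b y]

lemma mul_ktH_eq {a y : ℝ} (b : ℝ) (ha : 0 < a) (hy : a < y) :
    y * ktH a b y = ktRamp a b y := by
  rw [ktH, max_eq_left hy.le, mul_div_assoc']
  rw [mul_comm, mul_div_assoc, div_self (ne_of_gt (ha.trans hy)), mul_one]

lemma kt_Q_eval (p : Polynomial ℝ) (e : ℝ) (y : ℝ) :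
    ∑ k ∈ Finset.range (p.natDegree + 1),
        (p.coeff k + (if k = 0 then e else 0)) * y ^ (k+1)
      = y * p.eval y + e * y := by
  have h1 : ∀ k ∈ Finset.range (p.natDegree + 1),
      (p.coeff k + (if k = 0 then e else 0)) * y ^ (k+1)
        = p.coeff k * y ^ k * y + (if k = 0 then e * y else 0) := by
    intro k _
    by_cases hk : k = 0 <;> simp [hk] <;> ring
  rw [Finset.sum_congr rfl h1, Finset.sum_add_distrib,
    Finset.sum_ite_eq' (Finset.range (p.natDegree + 1)) 0 (fun _ => e * y)]
  rw [if_pos (Finset.mem_range.2 (Nat.succ_pos _))]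
  rw [← Finset.sum_mul, ← Polynomial.eval_eq_sum_range]
  ring

end KT4

section KT5
variable {γ : ℝ}

lemma kt_upper_poly (hγ : 0 < γ) {ε' δ : ℝ} (hε' : 0 < ε') (hδ : 0 < δ) :
    ∃ (n : ℕ) (c : ℕ → ℝ),
      (∀ y ∈ Icc (0:ℝ) 1, (if exp (-1) < y then (1:ℝ) else 0)
          ≤ ∑ k ∈ Finset.range n, c k * y ^ (k+1)) ∧
      ∑ k ∈ Finset.range n, c k / ((k:ℝ)+1) ^ γ
        ≤ (1+δ) ^ γ / Real.Gamma (γ+1) + 2*ε' := by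
  have hβ : (0:ℝ) < exp (-(1+δ)) := exp_pos _
  have hβα : exp (-(1+δ)) < exp (-1) := exp_lt_exp.2 (by linarith)
  obtain ⟨p, hp⟩ := exists_polynomial_near_of_continuousOn 0 1 (fun y => ktH (exp (-(1+δ))) (exp (-1)) y)
    (continuous_ktH _ hβ).continuousOn ε' hε'
  refine ⟨p.natDegree + 1, fun k => p.coeff k + (if k = 0 then ε' else 0), ?_, ?_⟩
  · intro y hy
    rw [kt_Q_eval]
    have hpy : ktH (exp (-(1+δ))) (exp (-1)) y - ε' < p.eval y := by
      have := hp y hy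
      rw [abs_lt] at this
      linarith [this.1]
    have hy0 : 0 ≤ y := hy.1
    have step1 : y * ktH (exp (-(1+δ))) (exp (-1)) y ≤ y * p.eval y + ε' * y := by
      nlinarith [mul_le_mul_of_nonneg_left hpy.le hy0]
    refine le_trans ?_ step1
    by_cases hαy : exp (-1) < y
    · rw [if_pos hαy, mul_ktH_eq _ hβ (hβα.trans hαy),
        ktRamp_eq_one hβα hαy.le]
    · rw [if_neg hαy]
      exact mul_nonneg hy0 (ktH_nonneg _ hβ y)
  · have hΓpos : 0 < Real.Gamma γ := Real.Gamma_pos_of_pos hγ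
    set c : ℕ → ℝ := fun k => p.coeff k + (if k = 0 then ε' else 0) with hc
    set n : ℕ := p.natDegree + 1 with hn
    have hptwise : ∀ u ∈ Ioi (0:ℝ),
        u ^ (γ-1) * ∑ k ∈ Finset.range n, c k * exp (-u) ^ (k+1)
          ≤ (Ioc (0:ℝ) (1+δ)).indicator (fun u => u ^ (γ-1)) u
            + 2*ε' * (exp (-u) * u ^ (γ-1)) := by
      intro u hu
      have hu' : (0:ℝ) < u := hu
      have hupow : (0:ℝ) ≤ u ^ (γ-1) := rpow_nonneg hu'.le _
      have hy0 : (0:ℝ) < exp (-u) := exp_pos _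
      have hy1 : exp (-u) ≤ 1 := exp_le_one_iff.2 (by linarith)
      have hQ : ∑ k ∈ Finset.range n, c k * exp (-u) ^ (k+1)
          = exp (-u) * p.eval (exp (-u)) + ε' * exp (-u) := kt_Q_eval p ε' (exp (-u))
      have hpy : p.eval (exp (-u)) < ktH (exp (-(1+δ))) (exp (-1)) (exp (-u)) + ε' := by
        have := hp (exp (-u)) ⟨hy0.le, hy1⟩
        rw [abs_lt] at this
        linarith [this.2]
      have hstep : ∑ k ∈ Finset.range n, c k * exp (-u) ^ (k+1)
          ≤ ktRamp (exp (-(1+δ))) (exp (-1)) (exp (-u)) + 2*ε' * exp (-u) := by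
        rw [hQ]
        have h2 : exp (-u) * p.eval (exp (-u))
            ≤ exp (-u) * ktH (exp (-(1+δ))) (exp (-1)) (exp (-u)) + ε' * exp (-u) := by
          nlinarith [mul_le_mul_of_nonneg_left hpy.le hy0.le]
        have h3 := mul_ktH_le (exp (-1)) hβ hy0.le
        linarith
      have hind : ktRamp (exp (-(1+δ))) (exp (-1)) (exp (-u))
          ≤ (Ioc (0:ℝ) (1+δ)).indicator (fun _ => (1:ℝ)) u := by
        by_cases hub : u ≤ 1+δ
        · rw [indicator_of_mem (Set.mem_Ioc.mpr ⟨hu', hub⟩)]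
          exact ktRamp_le_one _ _ _
        · rw [indicator_of_notMem (fun hmem => hub hmem.2)]
          push_neg at hub
          exact le_of_eq (ktRamp_eq_zero hβα (exp_le_exp.2 (by linarith)))
      calc u ^ (γ-1) * ∑ k ∈ Finset.range n, c k * exp (-u) ^ (k+1)
          ≤ u ^ (γ-1) * (ktRamp (exp (-(1+δ))) (exp (-1)) (exp (-u)) + 2*ε' * exp (-u)) :=
            mul_le_mul_of_nonneg_left hstep hupow
        _ ≤ u ^ (γ-1) * ((Ioc (0:ℝ) (1+δ)).indicator (fun _ => (1:ℝ)) u + 2*ε' * exp (-u)) := by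
            refine mul_le_mul_of_nonneg_left ?_ hupow
            linarith
        _ = u ^ (γ-1) * (Ioc (0:ℝ) (1+δ)).indicator (fun _ => (1:ℝ)) u
              + 2*ε' * (exp (-u) * u ^ (γ-1)) := by ring
        _ = (Ioc (0:ℝ) (1+δ)).indicator (fun u => u ^ (γ-1)) u
              + 2*ε' * (exp (-u) * u ^ (γ-1)) := by
            congr 1
            by_cases hub : u ∈ Ioc (0:ℝ) (1+δ)
            · rw [indicator_of_mem hub, indicator_of_mem hub]
              exact (mul_one _)
            · rw [indicator_of_notMem hub, indicator_of_notMem hub, mul_zero]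
    have hδpos : (0:ℝ) < 1 + δ := by linarith
    have hmono := setIntegral_mono_on (kt_M_integrable hγ c n)
      ((kt_ind_integrable hγ hδpos).add ((Real.GammaIntegral_convergent hγ).const_mul (2*ε')))
      measurableSet_Ioi hptwise
    rw [kt_M_eq hγ c n] at hmono
    simp only [Pi.add_apply] at hmono
    rw [integral_add (kt_ind_integrable hγ hδpos)
      ((Real.GammaIntegral_convergent hγ).const_mul (2*ε')),
      kt_ind_integral hγ hδpos, MeasureTheory.integral_const_mul,
      ← Real.Gamma_eq_integral hγ] at hmono
    rw [Real.Gamma_add_one hγ.ne']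
    rw [← mul_le_mul_iff_right₀ hΓpos]
    have hid : Real.Gamma γ * ((1+δ)^γ/(γ*Real.Gamma γ) + 2*ε')
        = (1+δ)^γ/γ + 2*ε'*Real.Gamma γ := by
      field_simp
    rw [mul_add] at hid ⊢
    calc Real.Gamma γ * ∑ k ∈ Finset.range n, c k / ((k:ℝ)+1) ^ γ
        ≤ (1+δ)^γ/γ + 2*ε'*Real.Gamma γ := hmono
      _ = Real.Gamma γ * ((1+δ)^γ/(γ*Real.Gamma γ)) + Real.Gamma γ * (2*ε') := hid.symm

lemma kt_lower_poly (hγ : 0 < γ) {ε' δ : ℝ} (hε' : 0 < ε') (hδ : 0 < δ) (hδ1 : δ < 1) :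
    ∃ (n : ℕ) (c : ℕ → ℝ),
      (∀ y ∈ Icc (0:ℝ) 1, ∑ k ∈ Finset.range n, c k * y ^ (k+1)
          ≤ (if exp (-1) < y then (1:ℝ) else 0)) ∧
      (1-δ) ^ γ / Real.Gamma (γ+1) - 2*ε'
        ≤ ∑ k ∈ Finset.range n, c k / ((k:ℝ)+1) ^ γ := by
  have hα : (0:ℝ) < exp (-1) := exp_pos _
  have hαb : exp (-1) < exp (-(1-δ)) := exp_lt_exp.2 (by linarith)
  obtain ⟨p, hp⟩ := exists_polynomial_near_of_continuousOn 0 1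
    (fun y => ktH (exp (-1)) (exp (-(1-δ))) y)
    (continuous_ktH _ hα).continuousOn ε' hε'
  refine ⟨p.natDegree + 1, fun k => p.coeff k + (if k = 0 then -ε' else 0), ?_, ?_⟩
  · intro y hy
    rw [kt_Q_eval]
    have hpy : p.eval y < ktH (exp (-1)) (exp (-(1-δ))) y + ε' := by
      have := hp y hy
      rw [abs_lt] at this
      linarith [this.2]
    have hy0 : 0 ≤ y := hy.1
    have step1 : y * p.eval y + (-ε') * y ≤ y * ktH (exp (-1)) (exp (-(1-δ))) y := by
      nlinarith [mul_le_mul_of_nonneg_left hpy.le hy0]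
    refine le_trans step1 ?_
    refine le_trans (mul_ktH_le _ hα hy0) ?_
    by_cases hαy : exp (-1) < y
    · rw [if_pos hαy]
      exact ktRamp_le_one _ _ _
    · rw [if_neg hαy]
      push_neg at hαy
      exact le_of_eq (ktRamp_eq_zero hαb hαy)
  · have hΓpos : 0 < Real.Gamma γ := Real.Gamma_pos_of_pos hγ
    set c : ℕ → ℝ := fun k => p.coeff k + (if k = 0 then -ε' else 0) with hc
    set n : ℕ := p.natDegree + 1 with hn
    have h1δ : (0:ℝ) < 1 - δ := by linarith
    have hptwise : ∀ u ∈ Ioi (0:ℝ),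
        (Ioc (0:ℝ) (1-δ)).indicator (fun u => u ^ (γ-1)) u
            - 2*ε' * (exp (-u) * u ^ (γ-1))
          ≤ u ^ (γ-1) * ∑ k ∈ Finset.range n, c k * exp (-u) ^ (k+1) := by
      intro u hu
      have hu' : (0:ℝ) < u := hu
      have hupow : (0:ℝ) ≤ u ^ (γ-1) := rpow_nonneg hu'.le _
      have hy0 : (0:ℝ) < exp (-u) := exp_pos _
      have hy1 : exp (-u) ≤ 1 := exp_le_one_iff.2 (by linarith)
      have hQ : ∑ k ∈ Finset.range n, c k * exp (-u) ^ (k+1)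
          = exp (-u) * p.eval (exp (-u)) + (-ε') * exp (-u) := kt_Q_eval p (-ε') (exp (-u))
      have hpy : ktH (exp (-1)) (exp (-(1-δ))) (exp (-u)) - ε' < p.eval (exp (-u)) := by
        have := hp (exp (-u)) ⟨hy0.le, hy1⟩
        rw [abs_lt] at this
        linarith [this.1]
      have hmul := mul_le_mul_of_nonneg_left hpy.le hy0.le
      by_cases hub : u ≤ 1-δ
      · rw [indicator_of_mem (Set.mem_Ioc.mpr ⟨hu', hub⟩)]
        have hble : exp (-(1-δ)) ≤ exp (-u) := exp_le_exp.2 (by linarith)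
        have hone : exp (-u) * ktH (exp (-1)) (exp (-(1-δ))) (exp (-u)) = 1 := by
          rw [mul_ktH_eq _ hα (lt_of_lt_of_le hαb hble), ktRamp_eq_one hαb hble]
        have h2 : 1 - 2*ε' * exp (-u) ≤ ∑ k ∈ Finset.range n, c k * exp (-u) ^ (k+1) := by
          rw [hQ]
          nlinarith [hmul, hone]
        nlinarith [mul_le_mul_of_nonneg_left h2 hupow]
      · rw [indicator_of_notMem (fun hmem => hub hmem.2)]
        have hnn : 0 ≤ exp (-u) * ktH (exp (-1)) (exp (-(1-δ))) (exp (-u)) :=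
          mul_nonneg hy0.le (ktH_nonneg _ hα _)
        have h2 : -(2*ε') * exp (-u) ≤ ∑ k ∈ Finset.range n, c k * exp (-u) ^ (k+1) := by
          rw [hQ]
          nlinarith [hmul, hnn]
        nlinarith [mul_le_mul_of_nonneg_left h2 hupow]
    have hmono := setIntegral_mono_on
      ((kt_ind_integrable hγ h1δ).sub ((Real.GammaIntegral_convergent hγ).const_mul (2*ε')))
      (kt_M_integrable hγ c n)
      measurableSet_Ioi hptwise
    simp only [Pi.sub_apply] at hmono
    rw [kt_M_eq hγ c n,
      integral_sub (kt_ind_integrable hγ h1δ)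
        ((Real.GammaIntegral_convergent hγ).const_mul (2*ε')),
      kt_ind_integral hγ h1δ, MeasureTheory.integral_const_mul,
      ← Real.Gamma_eq_integral hγ] at hmono
    rw [Real.Gamma_add_one hγ.ne', ← mul_le_mul_iff_right₀ hΓpos]
    have hid : Real.Gamma γ * ((1-δ)^γ/(γ*Real.Gamma γ) - 2*ε')
        = (1-δ)^γ/γ - 2*ε'*Real.Gamma γ := by
      field_simp
    calc Real.Gamma γ * ((1-δ)^γ/(γ*Real.Gamma γ) - 2*ε')
        = (1-δ)^γ/γ - 2*ε'*Real.Gamma γ := hid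
      _ ≤ Real.Gamma γ * ∑ k ∈ Finset.range n, c k / ((k:ℝ)+1) ^ γ := hmono

end KT5
section KT6

lemma kt_ite_indicator {t : ℝ} (ht : 0 < t) (x : ℝ) (hx : x ∈ Ici (0:ℝ)) :
    (Ico (0:ℝ) t⁻¹).indicator (fun _ => (1:ℝ)) x
      = (if exp (-1) < exp (-t*x) then (1:ℝ) else 0) := by
  have hiff : x < t⁻¹ ↔ exp (-1) < exp (-t*x) := by
    rw [exp_lt_exp, inv_eq_one_div, lt_div_iff₀ ht]
    constructor <;> intro h' <;> nlinarith
  by_cases hxt : x < t⁻¹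
  · rw [indicator_of_mem (Set.mem_Ico.mpr ⟨mem_Ici.1 hx, hxt⟩), if_pos (hiff.1 hxt)]
  · rw [indicator_of_notMem (fun hmem => hxt hmem.2), if_neg (fun hcon => hxt (hiff.2 hcon))]

lemma kt_indicator_integral (ν : Measure ℝ) {t : ℝ} (ht : 0 < t) :
    ∫ x in Ici (0:ℝ), (Ico (0:ℝ) t⁻¹).indicator (fun _ => (1:ℝ)) x ∂ν
      = (ν (Ico 0 t⁻¹)).toReal := by
  rw [MeasureTheory.integral_indicator_const (1:ℝ) measurableSet_Ico, measureReal_def,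
    Measure.restrict_apply measurableSet_Ico,
    Set.inter_eq_left.2 (Ico_subset_Ici_self), smul_eq_mul, mul_one]

lemma kt_indicator_integrable (ν : Measure ℝ) {t : ℝ} (ht : 0 < t)
    (hIco : ν (Ico 0 t⁻¹) < ⊤) :
    IntegrableOn (fun x => (Ico (0:ℝ) t⁻¹).indicator (fun _ => (1:ℝ)) x) (Ici 0) ν := by
  rw [IntegrableOn, integrable_indicator_iff measurableSet_Ico]
  refine integrableOn_const (ne_of_lt ?_)
  exact lt_of_le_of_lt (Measure.restrict_apply_le _ _) hIco

lemma kt_compare_upper (ν : Measure ℝ) {t : ℝ} (ht : 0 < t)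
    (hIco : ν (Ico 0 t⁻¹) < ⊤) (c : ℕ → ℝ) (n : ℕ)
    (hint : IntegrableOn (fun x => ∑ k ∈ Finset.range n, c k * exp (-t*x) ^ (k+1)) (Ici 0) ν)
    (hup : ∀ y ∈ Icc (0:ℝ) 1, (if exp (-1) < y then (1:ℝ) else 0)
        ≤ ∑ k ∈ Finset.range n, c k * y ^ (k+1)) :
    (ν (Ico 0 t⁻¹)).toReal
      ≤ ∫ x in Ici 0, (∑ k ∈ Finset.range n, c k * exp (-t*x) ^ (k+1)) ∂ν := by
  rw [← kt_indicator_integral ν ht]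
  refine setIntegral_mono_on (kt_indicator_integrable ν ht hIco) hint measurableSet_Ici ?_
  intro x hx
  rw [kt_ite_indicator ht x hx]
  exact hup _ ⟨(exp_pos _).le, exp_le_one_iff.2 (by nlinarith [mem_Ici.1 hx])⟩

lemma kt_compare_lower (ν : Measure ℝ) {t : ℝ} (ht : 0 < t)
    (hIco : ν (Ico 0 t⁻¹) < ⊤) (c : ℕ → ℝ) (n : ℕ)
    (hint : IntegrableOn (fun x => ∑ k ∈ Finset.range n, c k * exp (-t*x) ^ (k+1)) (Ici 0) ν)
    (hlo : ∀ y ∈ Icc (0:ℝ) 1, ∑ k ∈ Finset.range n, c k * y ^ (k+1)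
        ≤ (if exp (-1) < y then (1:ℝ) else 0)) :
    ∫ x in Ici 0, (∑ k ∈ Finset.range n, c k * exp (-t*x) ^ (k+1)) ∂ν
      ≤ (ν (Ico 0 t⁻¹)).toReal := by
  rw [← kt_indicator_integral ν ht]
  refine setIntegral_mono_on hint (kt_indicator_integrable ν ht hIco) measurableSet_Ici ?_
  intro x hx
  rw [kt_ite_indicator ht x hx]
  exact hlo _ ⟨(exp_pos _).le, exp_le_one_iff.2 (by nlinarith [mem_Ici.1 hx])⟩

end KT6
section KT7
variable (ν : Measure ℝ) {γ D : ℝ}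

lemma kt_Q_integrable
    (hfin : ∀ t : ℝ, 0 < t → ∫⁻ x in Ici 0, ENNReal.ofReal (exp (-t*x)) ∂ν < ⊤)
    {t : ℝ} (ht : 0 < t) (c : ℕ → ℝ) (n : ℕ) :
    IntegrableOn (fun x => ∑ k ∈ Finset.range n, c k * exp (-t*x) ^ (k+1)) (Ici 0) ν := by
  have key : ∀ (k : ℕ) (x : ℝ), exp (-t*x) ^ (k+1) = exp (-(((k:ℝ)+1)*t)*x) := by
    intro k x
    rw [← Real.exp_nat_mul]
    push_cast
    ring_nf
  have hrw : (fun x => ∑ k ∈ Finset.range n, c k * exp (-t*x) ^ (k+1))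
      = fun x => ∑ k ∈ Finset.range n, c k * exp (-(((k:ℝ)+1)*t)*x) := by
    funext x
    exact Finset.sum_congr rfl (fun k _ => by rw [key])
  rw [hrw]
  refine integrable_finset_sum _ (fun k _ => ?_)
  have hc : (0:ℝ) < ((k:ℝ)+1)*t := by positivity
  exact (kt_integrable ν hc (hfin _ hc)).const_mul (c k)

lemma kt_core (hγ : 0 < γ) (hD : 0 ≤ D)
    (h : Tendsto (fun t : ℝ =>
        ENNReal.ofReal (t ^ γ) *
          ∫⁻ x in Set.Ici (0:ℝ), ENNReal.ofReal (Real.exp (-t * x)) ∂ν)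
      (nhdsWithin 0 (Set.Ioi 0)) (nhds (ENNReal.ofReal D))) :
    Tendsto (fun t : ℝ => t ^ γ * (ν (Ico 0 t⁻¹)).toReal)
      (nhdsWithin 0 (Ioi 0)) (nhds (D / Real.Gamma (γ+1))) := by
  have hfin := kt_fin ν hγ h
  have hΓ1 : 0 < Real.Gamma (γ+1) := Real.Gamma_pos_of_pos (by linarith)
  rw [tendsto_order]
  constructor
  · -- lower bound
    intro b hb
    set g : ℝ := D / Real.Gamma (γ+1) - b with hg
    have hgpos : 0 < g := by simp [hg]; linarith
    set ε' : ℝ := g / (8*(D+1)) with hε'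
    have hε'pos : 0 < ε' := by positivity
    have h2Dε' : 2*D*ε' ≤ g/4 := by
      rw [hε', show 2*D*(g/(8*(D+1))) = (2*D*g)/(8*(D+1)) from by ring,
        div_le_div_iff₀ (by nlinarith : (0:ℝ) < 8*(D+1)) (by norm_num : (0:ℝ) < 4)]
      nlinarith
    -- choose δ
    have hcont : Tendsto (fun δ : ℝ => D * (1-δ)^γ / Real.Gamma (γ+1))
        (nhdsWithin 0 (Ioi 0)) (nhds (D / Real.Gamma (γ+1))) := by
      have hc1 : ContinuousAt (fun δ : ℝ => D * (1-δ)^γ / Real.Gamma (γ+1)) 0 := by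
        refine (ContinuousAt.mul continuousAt_const ?_).div_const _
        exact ContinuousAt.rpow_const (continuousAt_const.sub continuousAt_id) (Or.inl (by norm_num))
      have := hc1.tendsto
      simp only [sub_zero, Real.one_rpow, mul_one] at this
      exact this.mono_left nhdsWithin_le_nhds
    have hev : ∀ᶠ δ : ℝ in nhdsWithin 0 (Ioi 0),
        b + g/4 < D * (1-δ)^γ / Real.Gamma (γ+1) :=
      hcont.eventually_const_lt (by rw [hg]; linarith)
    obtain ⟨δ, hδ1, hδpos, hδlt1⟩ :=
      (hev.and (eventually_of_mem (Ioo_mem_nhdsGT_of_mem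
        (Set.mem_Ico.mpr ⟨le_refl (0:ℝ), one_pos⟩)) (fun x hx => hx))).exists
    obtain ⟨n, c, hc1, hc2⟩ := kt_lower_poly hγ hε'pos hδpos hδlt1
    have hQ := kt_tendsto_Q ν hγ hD h hfin c n
    have hblt : b < D * ∑ k ∈ Finset.range n, c k / ((k:ℝ)+1) ^ γ := by
      have h3 : D * ((1-δ)^γ / Real.Gamma (γ+1) - 2*ε')
          ≤ D * ∑ k ∈ Finset.range n, c k / ((k:ℝ)+1) ^ γ :=
        mul_le_mul_of_nonneg_left hc2 hD
      have h4 : D * ((1-δ)^γ / Real.Gamma (γ+1) - 2*ε')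
          = D * (1-δ)^γ / Real.Gamma (γ+1) - 2*D*ε' := by ring
      linarith
    have hev2 := hQ.eventually_const_lt hblt
    filter_upwards [hev2, self_mem_nhdsWithin] with t htb ht
    have ht' : (0:ℝ) < t := ht
    refine htb.trans_le ?_
    refine le_trans (mul_le_mul_of_nonneg_left ?_ (rpow_nonneg ht'.le γ)) (le_refl _)
    exact kt_compare_lower ν ht' (kt_Ico_fin ν one_pos (hfin 1 one_pos) _) c n
      (kt_Q_integrable ν hfin ht' c n) hc1
  · -- upper bound
    intro b hb
    set g : ℝ := b - D / Real.Gamma (γ+1) with hg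
    have hgpos : 0 < g := by simp [hg]; linarith
    set ε' : ℝ := g / (8*(D+1)) with hε'
    have hε'pos : 0 < ε' := by positivity
    have h2Dε' : 2*D*ε' ≤ g/4 := by
      rw [hε', show 2*D*(g/(8*(D+1))) = (2*D*g)/(8*(D+1)) from by ring,
        div_le_div_iff₀ (by nlinarith : (0:ℝ) < 8*(D+1)) (by norm_num : (0:ℝ) < 4)]
      nlinarith
    have hcont : Tendsto (fun δ : ℝ => D * (1+δ)^γ / Real.Gamma (γ+1))
        (nhdsWithin 0 (Ioi 0)) (nhds (D / Real.Gamma (γ+1))) := by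
      have hc1 : ContinuousAt (fun δ : ℝ => D * (1+δ)^γ / Real.Gamma (γ+1)) 0 := by
        refine (ContinuousAt.mul continuousAt_const ?_).div_const _
        exact ContinuousAt.rpow_const (continuousAt_const.add continuousAt_id) (Or.inl (by norm_num))
      have := hc1.tendsto
      simp only [add_zero, Real.one_rpow, mul_one] at this
      exact this.mono_left nhdsWithin_le_nhds
    have hev : ∀ᶠ δ : ℝ in nhdsWithin 0 (Ioi 0),
        D * (1+δ)^γ / Real.Gamma (γ+1) < b - g/4 :=
      hcont.eventually_lt_const (by rw [hg]; linarith)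
    obtain ⟨δ, hδ1, hδpos⟩ := (hev.and self_mem_nhdsWithin).exists
    obtain ⟨n, c, hc1, hc2⟩ := kt_upper_poly hγ hε'pos hδpos
    have hQ := kt_tendsto_Q ν hγ hD h hfin c n
    have hblt : D * ∑ k ∈ Finset.range n, c k / ((k:ℝ)+1) ^ γ < b := by
      have h3 : D * ∑ k ∈ Finset.range n, c k / ((k:ℝ)+1) ^ γ
          ≤ D * ((1+δ)^γ / Real.Gamma (γ+1) + 2*ε') :=
        mul_le_mul_of_nonneg_left hc2 hD
      have h4 : D * ((1+δ)^γ / Real.Gamma (γ+1) + 2*ε')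
          = D * (1+δ)^γ / Real.Gamma (γ+1) + 2*D*ε' := by ring
      linarith
    have hev2 := hQ.eventually_lt_const hblt
    filter_upwards [hev2, self_mem_nhdsWithin] with t htb ht
    have ht' : (0:ℝ) < t := ht
    refine lt_of_le_of_lt ?_ htb
    refine mul_le_mul_of_nonneg_left ?_ (rpow_nonneg ht'.le γ)
    exact kt_compare_upper ν ht' (kt_Ico_fin ν one_pos (hfin 1 one_pos) _) c n
      (kt_Q_integrable ν hfin ht' c n) hc1

end KT7
/-- Karamata's Tauberian theorem: if `t^γ ∫_{[0,∞)} e^{-tx} dν(x) → D` as `t → 0⁺`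
with `γ > 0`, then `ν([0,a))/a^γ → D/Γ(γ+1)` as `a → ∞`. -/
theorem karamata_tauberian
    (ν : Measure ℝ) [SigmaFinite ν] (hν : ν (Set.Iio 0) = 0)
    (γ D : ℝ) (hγ : 0 < γ) (hD : 0 ≤ D)
    (h : Tendsto (fun t : ℝ =>
        ENNReal.ofReal (t ^ γ) *
          ∫⁻ x in Set.Ici (0:ℝ), ENNReal.ofReal (Real.exp (-t * x)) ∂ν)
      (nhdsWithin 0 (Set.Ioi 0)) (nhds (ENNReal.ofReal D))) :
    Tendsto (fun a : ℝ => ν (Set.Ico 0 a) / ENNReal.ofReal (a ^ γ)) atTop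
      (nhds (ENNReal.ofReal (D / Real.Gamma (γ + 1)))) := by
  have hfin := kt_fin ν hγ h
  have hcore := kt_core ν hγ hD h
  have h2 := hcore.comp tendsto_inv_atTop_nhdsGT_zero
  have h3 := ENNReal.tendsto_ofReal h2
  refine h3.congr' ?_
  filter_upwards [eventually_gt_atTop (0:ℝ)] with a ha
  have hIco : ν (Ico 0 a) < ⊤ := kt_Ico_fin ν one_pos (hfin 1 one_pos) a
  rw [Function.comp_apply, inv_inv, Real.inv_rpow ha.le, ← div_eq_inv_mul,
    ENNReal.ofReal_div_of_pos (rpow_pos_of_pos ha γ),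
    ENNReal.ofReal_toReal hIco.ne]
end

section
/- Let f_i : X → ℝ be continuous functions on a proper metric space X, uniformly bounded on bounded sets and locally equi-continuous, and let f : X → ℝ be continuous. Suppose that for every sequence y_i → y with y in the support of a Borel measure m, and measures m_i converging weakly to m in duality with continuous functions of bounded support, one has f_i(y_i) → f(y). Then for every ζ continuous with bounded support, ∫ ζ² f_i² dm_i → ∫ ζ² f² dm. -/
open MeasureTheory Filter Set Metric

lemma aux_hcs_sq_mul {X : Type*} [TopologicalSpace X] (ζ g : X → ℝ)
    (h : HasCompactSupport ζ) : HasCompactSupport (fun x => ζ x ^ 2 * g x) := by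
  have h2 : (fun x => ζ x ^ 2 * g x) = ζ * (fun x => ζ x * g x) := by
    funext x; simp [pow_two]; ring
  rw [h2]; exact h.mul_right

lemma aux_hcs_sq {X : Type*} [TopologicalSpace X] (ζ : X → ℝ)
    (h : HasCompactSupport ζ) : HasCompactSupport (fun x => ζ x ^ 2) := by
  have h2 : (fun x => ζ x ^ 2) = ζ * ζ := by funext x; simp [pow_two]
  rw [h2]; exact h.mul_right

lemma aux_frac (ε M : ℝ) (hε : 0 < ε) (hM : 0 < M) :
    M ^ 2 * (ε / (4 * (M ^ 2 + 1))) < ε / 4 := by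
  have key : M ^ 2 * (ε / (4 * (M ^ 2 + 1))) = ε * M ^ 2 / (4 * (M ^ 2 + 1)) := by ring
  rw [key, div_lt_div_iff₀ (by positivity) (by norm_num : (0:ℝ) < 4)]
  nlinarith

lemma aux_integrable {X : Type*} [MetricSpace X] [ProperSpace X]
    [MeasurableSpace X] [BorelSpace X] (μ : Measure X) [IsLocallyFiniteMeasure μ]
    (h : X → ℝ) (hc : Continuous h) (hs : HasCompactSupport h) : Integrable h μ :=
  hc.integrable_of_hasCompactSupport hs

/-- Proposition 3.2, (1) ⇒ (3): for equi-bounded, locally equi-continuous continuous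
functions `f i` on a proper metric space with measures `m i ⇀ m` in duality with
continuous functions of bounded support, pointwise convergence along converging
sequences towards points of the support of `m` implies `L²`-strong convergence:
`∫ ζ² (f i)² dm_i → ∫ ζ² f² dm` for every `ζ` continuous with bounded support. -/
theorem pointwise_to_L2_strong_convergence
    {X : Type*} [MetricSpace X] [ProperSpace X]
    [MeasurableSpace X] [BorelSpace X] (x₀ : X)
    (m' : ℕ → Measure X) (m : Measure X)
    [∀ i, IsLocallyFiniteMeasure (m' i)] [IsLocallyFiniteMeasure m]
    (hweak : ∀ ζ : X → ℝ, Continuous ζ → HasCompactSupport ζ →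
      Tendsto (fun i => ∫ x, ζ x ∂(m' i)) atTop (nhds (∫ x, ζ x ∂m)))
    (f : ℕ → X → ℝ) (f₀ : X → ℝ)
    (hfc : ∀ i, Continuous (f i)) (hf₀c : Continuous f₀)
    (hbd : ∀ R > 0, ∃ M : ℝ, ∀ i, ∀ y ∈ Metric.closedBall x₀ R, |f i y| ≤ M)
    (hequi : ∀ ε > 0, ∀ R > 0, ∃ δ > 0, ∀ i, ∀ y ∈ Metric.closedBall x₀ R,
      ∀ z ∈ Metric.closedBall x₀ R, dist y z < δ → |f i y - f i z| < ε)
    (hpt : ∀ y : X, (∀ ε > 0, 0 < m (Metric.ball y ε)) →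
      ∀ ys : ℕ → X, Tendsto ys atTop (nhds y) →
        Tendsto (fun i => f i (ys i)) atTop (nhds (f₀ y))) :
    ∀ ζ : X → ℝ, Continuous ζ → HasCompactSupport ζ →
      Tendsto (fun i => ∫ x, (ζ x) ^ 2 * (f i x) ^ 2 ∂(m' i)) atTop
        (nhds (∫ x, (ζ x) ^ 2 * (f₀ x) ^ 2 ∂m)) := by
  intro ζ hζc hζs
  -- the support of `m`
  set S : Set X := {y | ∀ ε > 0, 0 < m (Metric.ball y ε)} with hSdef
  have hSc : IsClosed S := by
    rw [← isOpen_compl_iff, Metric.isOpen_iff]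
    intro x hx
    simp only [hSdef, mem_compl_iff, mem_setOf_eq, not_forall] at hx
    obtain ⟨ε, hε, hball⟩ := hx
    refine ⟨ε / 2, by linarith, fun z hz => ?_⟩
    simp only [hSdef, mem_compl_iff, mem_setOf_eq, not_forall]
    refine ⟨ε / 2, by linarith, ?_⟩
    intro hpos
    have hsub : Metric.ball z (ε / 2) ⊆ Metric.ball x ε := by
      intro w hw
      rw [mem_ball] at *
      have := dist_triangle w z x
      linarith [hz, hw]
    have h0 : m (Metric.ball x ε) = 0 := by
      by_contra h
      exact hball (lt_of_le_of_ne zero_le (Ne.symm h))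
    exact absurd (le_antisymm (h0 ▸ measure_mono hsub) zero_le) (ne_of_gt hpos)
  have hSnull : m Sᶜ = 0 := by
    apply measure_null_of_locally_null
    intro x hx
    simp only [hSdef, mem_compl_iff, mem_setOf_eq, not_forall] at hx
    obtain ⟨ε, hε, hball⟩ := hx
    have h0 : m (Metric.ball x ε) = 0 := by
      by_contra h
      exact hball (lt_of_le_of_ne zero_le (Ne.symm h))
    exact ⟨Metric.ball x ε, mem_nhdsWithin_of_mem_nhds (Metric.ball_mem_nhds x hε), h0⟩
  -- radius containing the support of ζ
  obtain ⟨R, hR1, hK⟩ : ∃ R ≥ 1, tsupport ζ ⊆ Metric.closedBall x₀ R := by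
    obtain ⟨r, hr⟩ := hζs.isBounded.subset_closedBall x₀
    exact ⟨max r 1, le_max_right _ _,
      hr.trans (Metric.closedBall_subset_closedBall (le_max_left _ _))⟩
  -- uniform bound on f i and f₀ on closedBall x₀ (R+2)
  obtain ⟨M₁, hM₁⟩ := hbd (R + 2) (by linarith)
  obtain ⟨M₂, hM₂⟩ :=
    (isCompact_closedBall x₀ (R + 2)).exists_bound_of_continuousOn hf₀c.continuousOn
  set M : ℝ := max (max M₁ M₂) 1 with hMdef
  have hM1 : (1 : ℝ) ≤ M := le_max_right _ _
  have hMpos : (0 : ℝ) < M := by linarith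
  have hMf : ∀ i, ∀ y ∈ Metric.closedBall x₀ (R + 2), |f i y| ≤ M := fun i y hy =>
    (hM₁ i y hy).trans ((le_max_left _ _).trans (le_max_left _ _))
  have hMf₀ : ∀ y ∈ Metric.closedBall x₀ (R + 2), |f₀ y| ≤ M := by
    intro y hy
    have := hM₂ y hy
    rw [Real.norm_eq_abs] at this
    exact this.trans ((le_max_right _ _).trans (le_max_left _ _))
  -- main convergence via ε-characterization
  rw [Metric.tendsto_nhds]
  intro ε hε
  -- constants
  have hC0 : 0 ≤ ∫ x, ζ x ^ 2 ∂m := integral_nonneg fun x => sq_nonneg _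
  set C : ℝ := (∫ x, ζ x ^ 2 ∂m) + 1 with hCdef
  have hC1 : (1 : ℝ) ≤ C := by linarith
  have hCpos : (0 : ℝ) < C := by linarith
  set ε₁ : ℝ := ε / (24 * M * C) with hε₁def
  have hε₁pos : 0 < ε₁ := by positivity
  set ε₂ : ℝ := ε / (4 * (M ^ 2 + 1)) with hε₂def
  have hε₂pos : 0 < ε₂ := by positivity
  -- moduli of continuity
  obtain ⟨δ₁, hδ₁pos, hδ₁⟩ := hequi ε₁ hε₁pos (R + 2) (by linarith)
  obtain ⟨δ₂, hδ₂pos, hδ₂⟩ := Metric.uniformContinuousOn_iff.1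
    ((isCompact_closedBall x₀ (R + 2)).uniformContinuousOn_of_continuous
      hf₀c.continuousOn) ε₁ hε₁pos
  set δ : ℝ := min (min δ₁ δ₂) 1 / 2 with hδdef
  have hδpos : 0 < δ := by
    have := lt_min (lt_min hδ₁pos hδ₂pos) one_pos
    positivity
  have hδle1 : δ ≤ 1 / 2 := by
    have : min (min δ₁ δ₂) 1 ≤ 1 := min_le_right _ _
    simp only [hδdef]; linarith
  have h2δ : 2 * δ ≤ min δ₁ δ₂ := by
    have : min (min δ₁ δ₂) 1 ≤ min δ₁ δ₂ := min_le_left _ _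
    simp only [hδdef]; linarith
  -- finite δ-net of S ∩ closedBall x₀ (R+1)
  have hSBcomp : IsCompact (S ∩ Metric.closedBall x₀ (R + 1)) :=
    (isCompact_closedBall x₀ (R + 1)).inter_left hSc
  obtain ⟨t, htS, htfin, htcov⟩ := hSBcomp.finite_cover_balls hδpos
  -- eventual closeness at net points
  have hNy : ∀ᶠ i in atTop, ∀ y ∈ t, |f i y - f₀ y| < ε₁ := by
    rw [eventually_all_finite htfin]
    intro y hy
    have hT : Tendsto (fun i => f i y) atTop (nhds (f₀ y)) :=
      hpt y (htS hy).1 (fun _ => y) tendsto_const_nhds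
    have := hT (Metric.ball_mem_nhds (f₀ y) hε₁pos)
    filter_upwards [this] with i hi
    simpa only [Set.mem_preimage, Metric.mem_ball, Real.dist_eq] using hi
  -- cutoff function χ
  obtain ⟨χ, hχcont, hχ0, hχle, hχae, hχnz⟩ :
      ∃ χ : X → ℝ, Continuous χ ∧ (∀ x, 0 ≤ χ x) ∧ (∀ x, χ x ≤ 1) ∧
        (χ =ᵐ[m] fun _ => (1 : ℝ)) ∧ ∀ x, χ x ≠ 0 → ∃ s ∈ S, dist x s < δ := by
    rcases S.eq_empty_or_nonempty with hSe | hSe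
    · refine ⟨fun _ => 0, continuous_const, fun _ => le_rfl, fun _ => zero_le_one, ?_,
        fun x hx => absurd rfl hx⟩
      have hm0 : m univ = 0 := by
        have := hSnull
        rw [hSe, compl_empty] at this
        exact this
      have : m {x | ¬ (fun _ => (0:ℝ)) x = (fun _ => (1:ℝ)) x} = 0 :=
        measure_mono_null (subset_univ _) hm0
      exact (ae_iff).2 this
    · refine ⟨fun x => 1 - min 1 (Metric.infDist x S / δ),
        continuous_const.sub (continuous_const.min
          ((Metric.continuous_infDist_pt S).div_const δ)), ?_, ?_, ?_, ?_⟩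
      · intro x
        have : min 1 (Metric.infDist x S / δ) ≤ 1 := min_le_left _ _
        linarith
      · intro x
        have h0 : 0 ≤ Metric.infDist x S / δ := div_nonneg Metric.infDist_nonneg hδpos.le
        have : 0 ≤ min 1 (Metric.infDist x S / δ) := le_min zero_le_one h0
        linarith
      · have hmem : ∀ᵐ x ∂m, x ∈ S := by
          rw [ae_iff]
          exact measure_mono_null (fun x hx => hx) hSnull
        filter_upwards [hmem] with x hx
        rw [Metric.infDist_zero_of_mem hx]
        norm_num
      · intro x hx
        have hlt : Metric.infDist x S / δ < 1 := by
          by_contra h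
          push_neg at h
          apply hx
          show (1:ℝ) - min 1 (Metric.infDist x S / δ) = 0
          rw [min_eq_left h]
          ring
        have : Metric.infDist x S < δ := by
          rw [div_lt_one hδpos] at hlt
          exact hlt
        exact (Metric.infDist_lt_iff hSe).1 this
  -- key pointwise estimate
  have hkey : ∀ᶠ i in atTop, ∀ x, ζ x ≠ 0 → χ x ≠ 0 → |f i x - f₀ x| < 3 * ε₁ := by
    filter_upwards [hNy] with i hi x hζx hχx
    have hxR : x ∈ Metric.closedBall x₀ R := hK (subset_tsupport ζ hζx)
    obtain ⟨s, hsS, hsd⟩ := hχnz x hχx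
    have hsB : s ∈ Metric.closedBall x₀ (R + 1) := by
      rw [mem_closedBall] at hxR ⊢
      have h1 := dist_triangle s x x₀
      have h2 : dist s x = dist x s := dist_comm s x
      linarith [hsd, hδle1]
    obtain ⟨y, hyt, hyd⟩ : ∃ y ∈ t, s ∈ Metric.ball y δ := by
      have := htcov ⟨hsS, hsB⟩
      simpa using this
    rw [Metric.mem_ball] at hyd
    have hxy : dist x y < min δ₁ δ₂ := by
      have h1 := dist_triangle x s y
      have h2 : dist s y = dist y s := dist_comm s y
      calc dist x y ≤ dist x s + dist s y := h1
        _ < δ + δ := by rw [h2]; exact add_lt_add hsd (by rwa [dist_comm] at hyd)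
        _ ≤ min δ₁ δ₂ := by linarith [h2δ]
    have hyB2 : y ∈ Metric.closedBall x₀ (R + 2) :=
      Metric.closedBall_subset_closedBall (by linarith) (htS hyt).2
    have hxB2 : x ∈ Metric.closedBall x₀ (R + 2) :=
      Metric.closedBall_subset_closedBall (by linarith) hxR
    have e1 : |f i x - f i y| < ε₁ :=
      hδ₁ i x hxB2 y hyB2 (lt_of_lt_of_le hxy (min_le_left _ _))
    have e2 : |f i y - f₀ y| < ε₁ := hi y hyt
    have e3 : |f₀ y - f₀ x| < ε₁ := by
      have := hδ₂ y hyB2 x hxB2 (by rw [dist_comm]; exact lt_of_lt_of_le hxy (min_le_right _ _))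
      rwa [Real.dist_eq] at this
    have habs1 : |f i x - f₀ x| ≤ |f i x - f i y| + |f i y - f₀ y| + |f₀ y - f₀ x| := by
      have t1 : |f i x - f₀ x| ≤ |f i x - f₀ y| + |f₀ y - f₀ x| := abs_sub_le _ _ _
      have t2 : |f i x - f₀ y| ≤ |f i x - f i y| + |f i y - f₀ y| := abs_sub_le _ _ _
      linarith
    linarith
  -- weak convergence facts
  have hζ2c : Continuous fun x => ζ x ^ 2 := by fun_prop
  have W1 : Tendsto (fun i => ∫ x, ζ x ^ 2 ∂(m' i)) atTop (nhds (∫ x, ζ x ^ 2 ∂m)) :=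
    hweak _ hζ2c (aux_hcs_sq ζ hζs)
  have hgχc : Continuous fun x => ζ x ^ 2 * (f₀ x ^ 2 * χ x) := by fun_prop
  have W2 : Tendsto (fun i => ∫ x, ζ x ^ 2 * (f₀ x ^ 2 * χ x) ∂(m' i)) atTop
      (nhds (∫ x, ζ x ^ 2 * (f₀ x ^ 2 * χ x) ∂m)) :=
    hweak _ hgχc (aux_hcs_sq_mul ζ _ hζs)
  have hrc : Continuous fun x => ζ x ^ 2 * (1 - χ x) := by fun_prop
  have W3 : Tendsto (fun i => ∫ x, ζ x ^ 2 * (1 - χ x) ∂(m' i)) atTop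
      (nhds (∫ x, ζ x ^ 2 * (1 - χ x) ∂m)) :=
    hweak _ hrc (aux_hcs_sq_mul ζ _ hζs)
  have hrest0 : (∫ x, ζ x ^ 2 * (1 - χ x) ∂m) = 0 := by
    apply integral_eq_zero_of_ae
    filter_upwards [hχae] with x hx
    simp [hx]
  have hgχeq : (∫ x, ζ x ^ 2 * (f₀ x ^ 2 * χ x) ∂m) = ∫ x, ζ x ^ 2 * f₀ x ^ 2 ∂m := by
    apply integral_congr_ae
    filter_upwards [hχae] with x hx
    rw [hx]; ring
  -- eventual integral bounds
  have E1 : ∀ᶠ i in atTop, (∫ x, ζ x ^ 2 ∂(m' i)) < C :=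
    W1.eventually_lt_const (by simp only [hCdef]; linarith)
  have E2 : ∀ᶠ i in atTop,
      |(∫ x, ζ x ^ 2 * (f₀ x ^ 2 * χ x) ∂(m' i)) - ∫ x, ζ x ^ 2 * (f₀ x ^ 2 * χ x) ∂m| < ε / 4 := by
    have := W2 (Metric.ball_mem_nhds _ (by positivity : (0:ℝ) < ε / 4))
    filter_upwards [this] with i hi
    simpa only [Set.mem_preimage, Metric.mem_ball, Real.dist_eq] using hi
  have E3 : ∀ᶠ i in atTop, (∫ x, ζ x ^ 2 * (1 - χ x) ∂(m' i)) < ε₂ := by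
    rw [hrest0] at W3
    exact W3.eventually_lt_const hε₂pos
  -- combine
  filter_upwards [hkey, E1, E2, E3] with i h1 h2 h3 h4
  set μ := m' i with hμdef
  -- integrability of everything wrt μ
  have If : Integrable (fun x => ζ x ^ 2 * f i x ^ 2) μ :=
    aux_integrable μ _ (by fun_prop) (aux_hcs_sq_mul ζ _ hζs)
  have Ifχ : Integrable (fun x => ζ x ^ 2 * (f i x ^ 2 * χ x)) μ :=
    aux_integrable μ _ (by fun_prop) (aux_hcs_sq_mul ζ _ hζs)
  have Ifr : Integrable (fun x => ζ x ^ 2 * (f i x ^ 2 * (1 - χ x))) μ :=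
    aux_integrable μ _ (by fun_prop) (aux_hcs_sq_mul ζ _ hζs)
  have If₀χ : Integrable (fun x => ζ x ^ 2 * (f₀ x ^ 2 * χ x)) μ :=
    aux_integrable μ _ hgχc (aux_hcs_sq_mul ζ _ hζs)
  have Iζ2 : Integrable (fun x => ζ x ^ 2) μ :=
    aux_integrable μ _ hζ2c (aux_hcs_sq ζ hζs)
  have Ir : Integrable (fun x => ζ x ^ 2 * (1 - χ x)) μ :=
    aux_integrable μ _ hrc (aux_hcs_sq_mul ζ _ hζs)
  -- splitting
  have hsplit : (∫ x, ζ x ^ 2 * f i x ^ 2 ∂μ) =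
      (∫ x, ζ x ^ 2 * (f i x ^ 2 * χ x) ∂μ) + ∫ x, ζ x ^ 2 * (f i x ^ 2 * (1 - χ x)) ∂μ := by
    rw [← integral_add Ifχ Ifr]
    apply integral_congr_ae
    filter_upwards with x
    ring
  -- term 1 estimate
  have hterm1 : |(∫ x, ζ x ^ 2 * (f i x ^ 2 * χ x) ∂μ) -
      ∫ x, ζ x ^ 2 * (f₀ x ^ 2 * χ x) ∂μ| ≤ ε / 4 := by
    rw [← integral_sub Ifχ If₀χ]
    have hb : ‖∫ x, (ζ x ^ 2 * (f i x ^ 2 * χ x) - ζ x ^ 2 * (f₀ x ^ 2 * χ x)) ∂μ‖ ≤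
        ∫ x, 6 * M * ε₁ * ζ x ^ 2 ∂μ := by
      apply norm_integral_le_of_norm_le (Iζ2.const_mul (6 * M * ε₁))
      filter_upwards with x
      rw [Real.norm_eq_abs]
      by_cases hζx : ζ x = 0
      · simp only [hζx, ne_eq, OfNat.ofNat_ne_zero, not_false_eq_true, zero_pow, zero_mul,
          sub_self, abs_zero, mul_zero]
        positivity
      by_cases hχx : χ x = 0
      · simp only [hχx, mul_zero, sub_self, abs_zero]
        positivity
      have hd := h1 x hζx hχx
      have hxB2 : x ∈ Metric.closedBall x₀ (R + 2) :=
        Metric.closedBall_subset_closedBall (by linarith) (hK (subset_tsupport ζ hζx))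
      have hfb := hMf i x hxB2
      have hf0b := hMf₀ x hxB2
      have heq : ζ x ^ 2 * (f i x ^ 2 * χ x) - ζ x ^ 2 * (f₀ x ^ 2 * χ x) =
          (ζ x ^ 2 * χ x) * ((f i x - f₀ x) * (f i x + f₀ x)) := by ring
      have h01 : |ζ x ^ 2 * χ x| = ζ x ^ 2 * χ x :=
        abs_of_nonneg (mul_nonneg (sq_nonneg _) (hχ0 x))
      rw [heq, abs_mul, h01, abs_mul]
      have hb1 : |f i x - f₀ x| ≤ 3 * ε₁ := hd.le
      have hb2 : |f i x + f₀ x| ≤ 2 * M := by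
        calc |f i x + f₀ x| ≤ |f i x| + |f₀ x| := abs_add_le _ _
          _ ≤ 2 * M := by linarith
      have hχx1 : χ x ≤ 1 := hχle x
      have hχx0 : 0 ≤ χ x := hχ0 x
      have hsq : (0:ℝ) ≤ ζ x ^ 2 := sq_nonneg _
      have hab : |f i x - f₀ x| * |f i x + f₀ x| ≤ 3 * ε₁ * (2 * M) :=
        mul_le_mul hb1 hb2 (abs_nonneg _) (by linarith : (0:ℝ) ≤ 3 * ε₁)
      have hnn : (0:ℝ) ≤ 3 * ε₁ * (2 * M) :=
        mul_nonneg (by linarith : (0:ℝ) ≤ 3 * ε₁) (by linarith : (0:ℝ) ≤ 2 * M)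
      calc ζ x ^ 2 * χ x * (|f i x - f₀ x| * |f i x + f₀ x|) ≤
            ζ x ^ 2 * χ x * (3 * ε₁ * (2 * M)) :=
            mul_le_mul_of_nonneg_left hab (mul_nonneg hsq hχx0)
        _ ≤ ζ x ^ 2 * (3 * ε₁ * (2 * M)) :=
            mul_le_mul_of_nonneg_right (mul_le_of_le_one_right hsq hχx1) hnn
        _ = 6 * M * ε₁ * ζ x ^ 2 := by ring
    rw [Real.norm_eq_abs] at hb
    have hc : (∫ x, 6 * M * ε₁ * ζ x ^ 2 ∂μ) = 6 * M * ε₁ * ∫ x, ζ x ^ 2 ∂μ :=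
      integral_const_mul _ _
    have hle : 6 * M * ε₁ * (∫ x, ζ x ^ 2 ∂μ) ≤ 6 * M * ε₁ * C := by
      apply mul_le_mul_of_nonneg_left h2.le
      positivity
    have heq4 : 6 * M * ε₁ * C = ε / 4 := by
      rw [hε₁def]
      field_simp
      ring
    calc |∫ x, (ζ x ^ 2 * (f i x ^ 2 * χ x) - ζ x ^ 2 * (f₀ x ^ 2 * χ x)) ∂μ| ≤
        ∫ x, 6 * M * ε₁ * ζ x ^ 2 ∂μ := hb
      _ = 6 * M * ε₁ * ∫ x, ζ x ^ 2 ∂μ := hc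
      _ ≤ 6 * M * ε₁ * C := hle
      _ = ε / 4 := heq4
  -- remainder term estimate
  have hterm3lo : 0 ≤ ∫ x, ζ x ^ 2 * (f i x ^ 2 * (1 - χ x)) ∂μ := by
    apply integral_nonneg
    intro x
    exact mul_nonneg (sq_nonneg _)
      (mul_nonneg (sq_nonneg _) (by linarith [hχle x] : (0:ℝ) ≤ 1 - χ x))
  have hterm3hi : (∫ x, ζ x ^ 2 * (f i x ^ 2 * (1 - χ x)) ∂μ) < ε / 4 := by
    have hmono : (∫ x, ζ x ^ 2 * (f i x ^ 2 * (1 - χ x)) ∂μ) ≤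
        ∫ x, M ^ 2 * (ζ x ^ 2 * (1 - χ x)) ∂μ := by
      apply integral_mono Ifr (Ir.const_mul (M ^ 2))
      intro x
      by_cases hζx : ζ x = 0
      · simp [hζx]
      have hxB2 : x ∈ Metric.closedBall x₀ (R + 2) :=
        Metric.closedBall_subset_closedBall (by linarith) (hK (subset_tsupport ζ hζx))
      have hfb := hMf i x hxB2
      have hf2 : f i x ^ 2 ≤ M ^ 2 := by
        rw [← sq_abs]
        exact pow_le_pow_left₀ (abs_nonneg _) hfb 2
      have h1x : 0 ≤ 1 - χ x := by linarith [hχle x]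
      have hsq : (0:ℝ) ≤ ζ x ^ 2 := sq_nonneg _
      calc ζ x ^ 2 * (f i x ^ 2 * (1 - χ x)) ≤ ζ x ^ 2 * (M ^ 2 * (1 - χ x)) :=
            mul_le_mul_of_nonneg_left (mul_le_mul_of_nonneg_right hf2 h1x) hsq
        _ = M ^ 2 * (ζ x ^ 2 * (1 - χ x)) := by ring
    have hc : (∫ x, M ^ 2 * (ζ x ^ 2 * (1 - χ x)) ∂μ) = M ^ 2 * ∫ x, ζ x ^ 2 * (1 - χ x) ∂μ :=
      integral_const_mul _ _
    have : M ^ 2 * (∫ x, ζ x ^ 2 * (1 - χ x) ∂μ) < M ^ 2 * ε₂ := by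
      apply mul_lt_mul_of_pos_left h4
      positivity
    have hfin : M ^ 2 * ε₂ < ε / 4 := by
      rw [hε₂def]
      exact aux_frac ε M hε hMpos
    calc (∫ x, ζ x ^ 2 * (f i x ^ 2 * (1 - χ x)) ∂μ) ≤
        ∫ x, M ^ 2 * (ζ x ^ 2 * (1 - χ x)) ∂μ := hmono
      _ = M ^ 2 * ∫ x, ζ x ^ 2 * (1 - χ x) ∂μ := hc
      _ < M ^ 2 * ε₂ := this
      _ < ε / 4 := hfin
  -- final computation
  rw [Real.dist_eq]
  have hdecomp : (∫ x, ζ x ^ 2 * f i x ^ 2 ∂μ) - (∫ x, ζ x ^ 2 * f₀ x ^ 2 ∂m) =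
      ((∫ x, ζ x ^ 2 * (f i x ^ 2 * χ x) ∂μ) - (∫ x, ζ x ^ 2 * (f₀ x ^ 2 * χ x) ∂μ)) +
      ((∫ x, ζ x ^ 2 * (f₀ x ^ 2 * χ x) ∂μ) - (∫ x, ζ x ^ 2 * (f₀ x ^ 2 * χ x) ∂m)) +
      (∫ x, ζ x ^ 2 * (f i x ^ 2 * (1 - χ x)) ∂μ) := by
    rw [hsplit, hgχeq]
    ring
  rw [hdecomp]
  have ha := abs_add_le
    (((∫ x, ζ x ^ 2 * (f i x ^ 2 * χ x) ∂μ) - (∫ x, ζ x ^ 2 * (f₀ x ^ 2 * χ x) ∂μ)) +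
      ((∫ x, ζ x ^ 2 * (f₀ x ^ 2 * χ x) ∂μ) - (∫ x, ζ x ^ 2 * (f₀ x ^ 2 * χ x) ∂m)))
    (∫ x, ζ x ^ 2 * (f i x ^ 2 * (1 - χ x)) ∂μ)
  have hb := abs_add_le
    ((∫ x, ζ x ^ 2 * (f i x ^ 2 * χ x) ∂μ) - (∫ x, ζ x ^ 2 * (f₀ x ^ 2 * χ x) ∂μ))
    ((∫ x, ζ x ^ 2 * (f₀ x ^ 2 * χ x) ∂μ) - (∫ x, ζ x ^ 2 * (f₀ x ^ 2 * χ x) ∂m))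
  have habs3 : |∫ x, ζ x ^ 2 * (f i x ^ 2 * (1 - χ x)) ∂μ| =
      ∫ x, ζ x ^ 2 * (f i x ^ 2 * (1 - χ x)) ∂μ := abs_of_nonneg hterm3lo
  rw [habs3] at ha
  linarith
end
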